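/- arXiv:1705.10917 — 8 statements merged into one kernel-verified Lean document; each statement's English description precedes it below -/
import Mathlib

section
/- Let f : ℝⁿ → ℝ be a nonconstant polynomial with n ≥ 2. If the zero set Z(f) = {x ∈ ℝⁿ | f(x) = 0} is compact, then f is bounded from below on ℝⁿ or f is bounded from above on ℝⁿ. -/
open MvPolynomial Set Asymptotics Filter

/-- The exponent vector of a monomial, viewed in `ℝⁿ`. -/
noncomputable def expR {n : ℕ} (α : Fin n →₀ ℕ) : Fin n → ℝ := fun i => (α i : ℝ)

/-- The Newton polyhedron (at infinity) of a polynomial: the convex hull of its exponents. -/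
noncomputable def Newton {n : ℕ} (f : MvPolynomial (Fin n) ℝ) : Set (Fin n → ℝ) :=
  convexHull ℝ (expR '' (f.support : Set (Fin n →₀ ℕ)))

/-- `d(q, Γ(f))`: the minimal value of `⟨q, ·⟩` on the Newton polyhedron. -/
noncomputable def dMin {n : ℕ} (q : Fin n → ℝ) (f : MvPolynomial (Fin n) ℝ) : ℝ :=
  sInf ((fun α : Fin n → ℝ => ∑ i, q i * α i) '' Newton f)

/-- `Δ(q, Γ(f))`: the face of the Newton polyhedron where `⟨q, ·⟩` attains its minimum. -/
noncomputable def face {n : ℕ} (q : Fin n → ℝ) (f : MvPolynomial (Fin n) ℝ) : Set (Fin n → ℝ) :=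
  {α ∈ Newton f | ∑ i, q i * α i = dMin q f}

/-- The Newton boundary at infinity: faces `Δ(q, Γ(f))` with `min_j q_j < 0`. -/
noncomputable def NewtonBoundary {n : ℕ} (f : MvPolynomial (Fin n) ℝ) : Set (Set (Fin n → ℝ)) :=
  {Δ | ∃ q : Fin n → ℝ, (∃ j, q j < 0) ∧ Δ = face q f}

open Classical in
/-- The truncation `f_Δ` of `f` to a face `Δ`. -/
noncomputable def trunc {n : ℕ} (f : MvPolynomial (Fin n) ℝ) (Δ : Set (Fin n → ℝ)) :
    MvPolynomial (Fin n) ℝ :=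
  ∑ α ∈ f.support.filter (fun α => expR α ∈ Δ), monomial α (f.coeff α)

/-- `𝒫(x) = Σ_{α ∈ Γ(f) ∩ ℤ₊ⁿ} |x^α|`. -/
noncomputable def P {n : ℕ} (f : MvPolynomial (Fin n) ℝ) (x : Fin n → ℝ) : ℝ :=
  ∑' α : {α : Fin n →₀ ℕ // expR α ∈ Newton f}, |∏ i, x i ^ ((α : Fin n →₀ ℕ) i)|

/-- Non-degeneracy at infinity. -/
def Nondeg {n : ℕ} (f : MvPolynomial (Fin n) ℝ) : Prop :=
  ∀ Δ ∈ NewtonBoundary f, ¬ ∃ x : Fin n → ℝ, (∀ i, x i ≠ 0) ∧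
    eval x (trunc f Δ) = 0 ∧ ∀ i, eval x (pderiv i (trunc f Δ)) = 0

/-- The norm of a polynomial: the maximum of the absolute values of its coefficients. -/
noncomputable def polyNorm {n : ℕ} (f : MvPolynomial (Fin n) ℝ) : ℝ :=
  ⨆ α ∈ f.support, |f.coeff α|

/-- Stable compactness of the zero set of `f`. -/
def StablyCompact {n : ℕ} (f : MvPolynomial (Fin n) ℝ) : Prop :=
  ∃ ε > 0, ∀ g : MvPolynomial (Fin n) ℝ, Newton g ⊆ Newton f → polyNorm g < ε →
    IsCompact {x : Fin n → ℝ | eval x (f + g) = 0}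

open Set Metric

lemma compl_ball_preconnected {E : Type*} [NormedAddCommGroup E] [NormedSpace ℝ E]
    (h : 1 < Module.rank ℝ E) {R : ℝ} (hR : 0 ≤ R) :
    IsPreconnected {x : E | R < ‖x‖} := by
  have hnt : Nontrivial E := rank_pos_iff_nontrivial.mp (lt_trans zero_lt_one h)
  obtain ⟨x₀, hx₀⟩ := exists_norm_eq E (by linarith : (0:ℝ) ≤ R + 1)
  apply isPreconnected_of_forall x₀
  intro y hy
  have hyR : R < ‖y‖ := hy
  set c : ℝ := ‖y‖ / ‖x₀‖ with hc
  have hx0pos : (0:ℝ) < ‖x₀‖ := by rw [hx₀]; linarith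
  have hcpos : 0 < c := div_pos (by linarith : (0:ℝ) < ‖y‖) hx0pos
  have hz : ‖c • x₀‖ = ‖y‖ := by
    rw [norm_smul, Real.norm_of_nonneg hcpos.le, hc, div_mul_cancel₀]
    exact hx0pos.ne'
  refine ⟨sphere (0:E) ‖y‖ ∪ segment ℝ (c • x₀) x₀, ?_, ?_, ?_, ?_⟩
  · rintro w (hw | hw)
    · simp only [mem_sphere_iff_norm, sub_zero] at hw
      simpa [hw] using hyR
    · obtain ⟨a, b, ha, hb, hab, rfl⟩ := hw
      have : a • c • x₀ + b • x₀ = (a * c + b) • x₀ := by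
        rw [smul_smul, add_smul]
      rw [this, Set.mem_setOf_eq, norm_smul, Real.norm_of_nonneg (by positivity)]
      rcases le_or_gt c 1 with h1 | h1
      · have : c ≤ a * c + b := by nlinarith
        calc R < c * ‖x₀‖ := by rw [hc, div_mul_cancel₀ _ hx0pos.ne']; exact hyR
        _ ≤ (a * c + b) * ‖x₀‖ := by nlinarith
      · have : 1 ≤ a * c + b := by nlinarith
        calc R < 1 * ‖x₀‖ := by rw [one_mul, hx₀]; linarith
        _ ≤ (a * c + b) * ‖x₀‖ := by nlinarith
  · exact Or.inr (right_mem_segment ..)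
  · exact Or.inl (by simpa [mem_sphere_iff_norm] using hz ▸ rfl)
  · apply IsPreconnected.union (c • x₀)
    · simpa [mem_sphere_iff_norm] using hz
    · exact left_mem_segment ..
    · exact (isPreconnected_sphere h 0 ‖y‖)
    · exact (convex_segment _ _).isPreconnected

theorem stmt0 {n : ℕ} (hn : 2 ≤ n) (f : MvPolynomial (Fin n) ℝ) (hf : f.totalDegree ≠ 0)
    (hc : IsCompact {x : Fin n → ℝ | eval x f = 0}) :
    (∃ m : ℝ, ∀ x : Fin n → ℝ, m ≤ eval x f) ∨ (∃ M : ℝ, ∀ x : Fin n → ℝ, eval x f ≤ M) := by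
  obtain ⟨r, hr⟩ := hc.isBounded.subset_closedBall 0
  set R : ℝ := max r 0 with hRdef
  have hR0 : (0:ℝ) ≤ R := le_max_right _ _
  set U : Set (Fin n → ℝ) := {x | R < ‖x‖} with hU
  have hrank : 1 < Module.rank ℝ (Fin n → ℝ) := by
    rw [rank_fin_fun]
    exact_mod_cast lt_of_lt_of_le one_lt_two (by exact_mod_cast hn)
  have hUconn : IsPreconnected U := compl_ball_preconnected hrank hR0
  have hcont : Continuous fun x : Fin n → ℝ => eval x f := f.continuous_eval
  have hne : ∀ x ∈ U, eval x f ≠ 0 := by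
    intro x hx h0
    have := hr h0
    rw [mem_closedBall, dist_zero_right] at this
    exact absurd (lt_of_lt_of_le hx (le_trans this (le_max_left _ _))) (lt_irrefl _)
  -- min/max on the closed ball
  obtain ⟨xm, _, hxm'⟩ := (isCompact_closedBall (0 : Fin n → ℝ) R).exists_isMinOn
    ⟨0, mem_closedBall_self hR0⟩ hcont.continuousOn
  obtain ⟨xM, _, hxM'⟩ := (isCompact_closedBall (0 : Fin n → ℝ) R).exists_isMaxOn
    ⟨0, mem_closedBall_self hR0⟩ hcont.continuousOn
  have hxm : ∀ y ∈ closedBall (0 : Fin n → ℝ) R, eval xm f ≤ eval y f := fun y hy => hxm' hy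
  have hxM : ∀ y ∈ closedBall (0 : Fin n → ℝ) R, eval y f ≤ eval xM f := fun y hy => hxM' hy
  by_cases hpos : ∀ x ∈ U, 0 < eval x f
  · left
    refine ⟨min (eval xm f) 0, fun x => ?_⟩
    rcases le_or_gt ‖x‖ R with hx | hx
    · exact le_trans (min_le_left _ _) (hxm x (by rwa [mem_closedBall, dist_zero_right]))
    · exact le_trans (min_le_right _ _) (hpos x hx).le
  · right
    push_neg at hpos
    obtain ⟨a, ha, haf⟩ := hpos
    have hafneg : eval a f < 0 := lt_of_le_of_ne haf (hne a ha)
    have hneg : ∀ x ∈ U, eval x f < 0 := by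
      intro b hb
      by_contra hbf
      push_neg at hbf
      have h0mem : (0:ℝ) ∈ Set.Icc (eval a f) (eval b f) := ⟨hafneg.le, hbf⟩
      have := hUconn.intermediate_value ha hb hcont.continuousOn h0mem
      obtain ⟨z, hz, hz0⟩ := this
      exact hne z hz hz0
    refine ⟨max (eval xM f) 0, fun x => ?_⟩
    rcases le_or_gt ‖x‖ R with hx | hx
    · exact le_trans (hxM x (by rwa [mem_closedBall, dist_zero_right])) (le_max_left _ _)
    · exact le_trans (hneg x hx).le (le_max_right _ _)
end

section
/- Let f = Σ_α a_α x^α : ℝⁿ → ℝ be a nonconstant polynomial with n ≥ 2 whose zero set Z(f) is compact. If f is bounded from below on ℝⁿ, then for every face Δ of the Newton polyhedron Γ(f) of the form Δ = Δ(q, Γ(f)) with min_j q_j < 0, the face polynomial f_Δ(x) = Σ_{α ∈ Δ} a_α x^α is nonnegative on all of ℝⁿ. -/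
open MvPolynomial Set Asymptotics Filter

section Aux

lemma newton_lb {n : ℕ} (q : Fin n → ℝ) (f : MvPolynomial (Fin n) ℝ) (hs : f.support.Nonempty) :
    ∀ y ∈ Newton f, f.support.inf' hs (fun α => ∑ i, q i * (α i : ℝ)) ≤ ∑ i, q i * y i := by
  set D := f.support.inf' hs (fun α => ∑ i, q i * (α i : ℝ)) with hD
  have hlin : IsLinearMap ℝ (fun y : Fin n → ℝ => ∑ i, q i * y i) := by
    constructor
    · intro a b; simp [mul_add, Finset.sum_add_distrib]
    · intro c a
      simp only [Pi.smul_apply, smul_eq_mul, Finset.mul_sum]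
      apply Finset.sum_congr rfl; intro i _; ring
  have hconv : Convex ℝ {y : Fin n → ℝ | D ≤ ∑ i, q i * y i} := convex_halfSpace_ge hlin D
  have hsub : Newton f ⊆ {y : Fin n → ℝ | D ≤ ∑ i, q i * y i} := by
    apply convexHull_min _ hconv
    rintro - ⟨α, hα, rfl⟩
    have h1 : α ∈ f.support := Finset.mem_coe.mp hα
    have h2 : D ≤ ∑ i, q i * (α i : ℝ) := Finset.inf'_le _ h1
    simpa only [Set.mem_setOf_eq, expR] using h2
  exact fun y hy => hsub hy

lemma dMin_eq {n : ℕ} (q : Fin n → ℝ) (f : MvPolynomial (Fin n) ℝ) (hs : f.support.Nonempty) :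
    dMin q f = f.support.inf' hs (fun α => ∑ i, q i * (α i : ℝ)) := by
  set D := f.support.inf' hs (fun α => ∑ i, q i * (α i : ℝ)) with hD
  have hlb := newton_lb q f hs
  obtain ⟨α₀, hα₀, hval⟩ := Finset.exists_mem_eq_inf' hs (fun α => ∑ i, q i * (α i : ℝ))
  have hmem : (∑ i, q i * expR α₀ i) ∈ (fun α : Fin n → ℝ => ∑ i, q i * α i) '' Newton f :=
    ⟨expR α₀, subset_convexHull ℝ _ ⟨α₀, by simpa using hα₀, rfl⟩, rfl⟩
  have hexp : (∑ i, q i * expR α₀ i) = D := by rw [hD, hval]; rfl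
  apply le_antisymm
  · exact csInf_le ⟨D, by rintro - ⟨y, hy, rfl⟩; exact hlb y hy⟩ (hexp ▸ hmem)
  · exact le_csInf ⟨_, hmem⟩ (by rintro - ⟨y, hy, rfl⟩; exact hlb y hy)

lemma pos_far {n : ℕ} (hn : 2 ≤ n) (f : MvPolynomial (Fin n) ℝ) (hf : f.totalDegree ≠ 0)
    (hc : IsCompact {x : Fin n → ℝ | eval x f = 0})
    (hb : ∃ m : ℝ, ∀ x : Fin n → ℝ, m ≤ eval x f) :
    ∃ R > 0, ∀ y : Fin n → ℝ, R ≤ ‖y‖ → 0 < eval y f := by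
  obtain ⟨m, hm⟩ := hb
  -- zero set in a ball
  obtain ⟨R₀, hR₀⟩ := hc.isBounded.subset_closedBall 0
  refine ⟨max R₀ 0 + 1, by positivity, ?_⟩
  set R := max R₀ 0 + 1 with hR
  -- a nonconstant line
  have hne : ∃ b : Fin n → ℝ, eval b f ≠ eval 0 f := by
    by_contra h
    push_neg at h
    have : f = C (eval 0 f) := MvPolynomial.funext (fun x => by simp [h x])
    rw [this] at hf; simp at hf
  obtain ⟨b, hbne⟩ := hne
  have hb0 : b ≠ 0 := by rintro rfl; exact hbne rfl
  have hbnorm : 0 < ‖b‖ := norm_pos_iff.mpr hb0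
  set g : Polynomial ℝ := MvPolynomial.aeval (fun i => Polynomial.C (b i) * Polynomial.X) f with hg
  have hgeval : ∀ t : ℝ, Polynomial.eval t g = eval (fun i => b i * t) f := by
    intro t
    have := MvPolynomial.comp_aeval (R := ℝ) (φ := Polynomial.aeval t)
      (f := fun i : Fin n => Polynomial.C (b i) * Polynomial.X)
    have h2 := congrArg (fun ψ => ψ f) this
    simp at h2
    simpa [hg, Polynomial.aeval_def, MvPolynomial.aeval_def] using h2
  have hsmul : ∀ t : ℝ, (fun i => b i * t) = t • b := by
    intro t; funext i; simp [mul_comm]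
  have hg1 : Polynomial.eval (1:ℝ) g = eval b f := by rw [hgeval]; norm_num
  have hg0 : Polynomial.eval (0:ℝ) g = eval 0 f := by
    rw [hgeval]
    have h0 : (fun i => b i * (0:ℝ)) = (0 : Fin n → ℝ) := by funext i; simp
    rw [h0]
  have hdeg : 0 < g.degree := by
    by_contra h
    push_neg at h
    apply hbne
    rw [← hg1, ← hg0, Polynomial.eq_C_of_degree_le_zero h]
    simp
  have habs := Polynomial.abs_tendsto_atTop g hdeg
  have hmg : ∀ t : ℝ, m ≤ Polynomial.eval t g := by
    intro t; rw [hgeval]; exact hm _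
  have h1 : ∀ᶠ t in atTop, |m| + 1 ≤ |Polynomial.eval t g| := habs.eventually_ge_atTop _
  intro y hy
  have hynorm : 0 < ‖y‖ := lt_of_lt_of_le (by positivity) hy
  have h2 : ∀ᶠ t in atTop, ‖y‖ / ‖b‖ ≤ t := eventually_ge_atTop _
  have h3 : ∀ᶠ t in atTop, (0:ℝ) ≤ t := eventually_ge_atTop _
  obtain ⟨t, ht1, ht2, ht3⟩ := (h1.and (h2.and h3)).exists
  set z := t • b with hz
  have hez : eval z f = Polynomial.eval t g := by rw [hgeval, hsmul]
  have hzpos : 0 < eval z f := by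
    rw [hez]
    rcases abs_cases (Polynomial.eval t g) with ⟨he, _⟩ | ⟨he, _⟩
    · nlinarith [abs_nonneg m, ht1]
    · nlinarith [hmg t, abs_nonneg m, neg_abs_le m, ht1]
  set r := ‖z‖ with hr'
  have hrz : ‖y‖ ≤ r := by
    have : r = t * ‖b‖ := by rw [hr', hz, norm_smul, Real.norm_eq_abs, abs_of_nonneg ht3]
    rw [this]
    calc ‖y‖ = (‖y‖ / ‖b‖) * ‖b‖ := by field_simp
    _ ≤ t * ‖b‖ := by apply mul_le_mul_of_nonneg_right ht2 hbnorm.le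
  by_contra hcon
  push_neg at hcon
  -- build connected set outside the ball
  set c := r / ‖y‖ with hcdef
  have hc1 : 1 ≤ c := (le_div_iff₀ hynorm).mpr (by linarith)
  set y' := c • y with hy'
  have hy'n : ‖y'‖ = r := by
    rw [hy', norm_smul, Real.norm_eq_abs, abs_of_nonneg (by positivity), hcdef]
    field_simp
  set s := segment ℝ y y' ∪ Metric.sphere (0 : Fin n → ℝ) r with hsdef
  have hrank : 1 < Module.rank ℝ (Fin n → ℝ) := by
    rw [rank_fin_fun]; exact_mod_cast (by omega : 1 < n)
  have hconn : IsPreconnected s := by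
    apply IsPreconnected.union y'
    · exact right_mem_segment ℝ y y'
    · simp [Metric.mem_sphere, dist_zero_right, hy'n]
    · exact (convex_segment y y').isPreconnected
    · exact isPreconnected_sphere hrank 0 r
  have hys : y ∈ s := Or.inl (left_mem_segment ℝ y y')
  have hzs : z ∈ s := Or.inr (by simp [Metric.mem_sphere, dist_zero_right, hr'])
  have hivt := hconn.intermediate_value hys hzs (MvPolynomial.continuous_eval f).continuousOn
  obtain ⟨w, hws, hw0⟩ := hivt ⟨hcon, hzpos.le⟩
  have hwn : ‖y‖ ≤ ‖w‖ := by
    rcases hws with hseg | hsph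
    · obtain ⟨a, b', ha, hb', hab, rfl⟩ := hseg
      have : a • y + b' • y' = (a + b' * c) • y := by
        rw [hy', smul_smul, ← add_smul]
      rw [this, norm_smul, Real.norm_eq_abs]
      have habc : 1 ≤ a + b' * c := by nlinarith
      rw [abs_of_nonneg (by linarith)]
      nlinarith
    · rw [mem_sphere_iff_norm, sub_zero] at hsph
      rw [hsph]; exact hrz
  have hwball := hR₀ hw0
  simp only [Metric.mem_closedBall, dist_zero_right] at hwball
  have : R₀ ≤ max R₀ 0 := le_max_left _ _
  linarith

lemma face_mem_iff {n : ℕ} (q : Fin n → ℝ) (f : MvPolynomial (Fin n) ℝ) {α : Fin n →₀ ℕ}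
    (hα : α ∈ f.support) : expR α ∈ face q f ↔ ∑ i, q i * (α i : ℝ) = dMin q f := by
  constructor
  · rintro ⟨-, h⟩; exact h
  · intro h
    exact ⟨subset_convexHull ℝ _ ⟨α, Finset.mem_coe.mpr hα, rfl⟩, h⟩

open Classical in
lemma eval_trunc {n : ℕ} (f : MvPolynomial (Fin n) ℝ) (Δ : Set (Fin n → ℝ)) (x : Fin n → ℝ) :
    eval x (trunc f Δ) = ∑ α ∈ f.support.filter (fun α => expR α ∈ Δ),
      f.coeff α * ∏ i, x i ^ (α i) := by
  rw [trunc, map_sum]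
  apply Finset.sum_congr rfl
  intro α hα
  rw [eval_monomial]
  congr 1
  exact Finsupp.prod_pow α _

lemma prod_rpow_sum {n : ℕ} {t : ℝ} (ht : 0 < t) (c : Fin n → ℝ) :
    ∏ i, t ^ (c i) = t ^ (∑ i, c i) := by
  rw [← Real.rpow_sum_of_pos ht]

lemma rpow_tendsto_atTop' {c : ℝ} (hc : c < 0) :
    Tendsto (fun t : ℝ => t ^ c) (nhdsWithin 0 (Set.Ioi 0)) atTop := by
  have h := (tendsto_rpow_atTop (y := -c) (by linarith)).comp tendsto_inv_nhdsGT_zero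
  apply h.congr'
  filter_upwards [self_mem_nhdsWithin] with t ht
  have ht' : (0:ℝ) < t := ht
  show (t⁻¹) ^ (-c) = t ^ c
  rw [Real.inv_rpow ht'.le, Real.rpow_neg ht'.le, inv_inv]

lemma tendsto_rpow_zero' {e : ℝ} (he : 0 < e) :
    Tendsto (fun t : ℝ => t ^ e) (nhdsWithin 0 (Set.Ioi 0)) (nhds 0) := by
  have hc := (Real.continuousAt_rpow_const 0 e (Or.inr he.le)).tendsto
  rw [Real.zero_rpow he.ne'] at hc
  exact hc.mono_left nhdsWithin_le_nhds

end Aux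

theorem stmt3 {n : ℕ} (hn : 2 ≤ n) (f : MvPolynomial (Fin n) ℝ) (hf : f.totalDegree ≠ 0)
    (hc : IsCompact {x : Fin n → ℝ | eval x f = 0})
    (hb : ∃ m : ℝ, ∀ x : Fin n → ℝ, m ≤ eval x f) :
    ∀ q : Fin n → ℝ, (∃ j, q j < 0) → ∀ x : Fin n → ℝ, 0 ≤ eval x (trunc f (face q f)) := by
  classical
  intro q hq x
  by_contra hcon
  push_neg at hcon
  obtain ⟨j, hqj⟩ := hq
  obtain ⟨R, hRpos, hRfar⟩ := pos_far hn f hf hc hb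
  have hf0 : f ≠ 0 := fun h => hf (by simp [h])
  have hsup : f.support.Nonempty := by
    rw [Finset.nonempty_iff_ne_empty]
    intro h
    exact hf0 (MvPolynomial.support_eq_empty.mp h)
  set g := trunc f (face q f) with hgdef
  -- move x to a point with nonzero j-th coordinate where g is still negative
  have hcontg : Continuous fun s : ℝ => eval (Function.update x j s) g := by
    apply (MvPolynomial.continuous_eval g).comp
    apply continuous_pi
    intro i
    have hcoord : (fun s : ℝ => Function.update x j s i) =
        (fun s : ℝ => if i = j then s else x i) := by
      funext s; simp [Function.update_apply]
    rw [hcoord]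
    by_cases hij : i = j
    · simp only [if_pos hij]
      exact continuous_id'
    · simp only [hij, if_false]
      exact continuous_const
  obtain ⟨s₀, hs₀ne, hs₀lt⟩ : ∃ s : ℝ, s ≠ 0 ∧ eval (Function.update x j s) g < 0 := by
    by_cases hxj : x j = 0
    · have hx0 : eval (Function.update x j (x j)) g < 0 := by
        rwa [Function.update_eq_self]
      rw [hxj] at hx0
      have hmem : {s : ℝ | eval (Function.update x j s) g < 0} ∈ nhds (0:ℝ) :=
        (isOpen_lt hcontg continuous_const).mem_nhds hx0
      have hmem2 : {s : ℝ | eval (Function.update x j s) g < 0} ∩ {(0:ℝ)}ᶜ ∈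
          nhdsWithin (0:ℝ) {(0:ℝ)}ᶜ :=
        Filter.inter_mem (mem_nhdsWithin_of_mem_nhds hmem) self_mem_nhdsWithin
      obtain ⟨s, hs1, hs2⟩ := Filter.nonempty_of_mem hmem2
      exact ⟨s, hs2, hs1⟩
    · exact ⟨x j, hxj, by rwa [Function.update_eq_self]⟩
  set x₀ := Function.update x j s₀ with hx₀def
  have hx0j : x₀ j = s₀ := Function.update_self j s₀ x
  have hcneg : eval x₀ g < 0 := hs₀lt
  set L : (Fin n →₀ ℕ) → ℝ := fun α => ∑ i, q i * (α i : ℝ) with hL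
  set D := dMin q f with hDdef
  have hDeq : D = f.support.inf' hsup L := dMin_eq q f hsup
  set Cf : (Fin n →₀ ℕ) → ℝ := fun α => f.coeff α * ∏ i, x₀ i ^ (α i) with hCf
  set T := f.support.filter (fun α => expR α ∈ face q f) with hT
  set T' := f.support.filter (fun α => ¬ expR α ∈ face q f) with hT'
  have hcst : eval x₀ g = ∑ α ∈ T, Cf α := by
    rw [hgdef, eval_trunc]
  -- the curve and the key factorization
  set xt : ℝ → (Fin n → ℝ) := fun t i => x₀ i * t ^ (q i) with hxt
  have key : ∀ t : ℝ, 0 < t → eval (xt t) f =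
      t ^ D * ((∑ α ∈ T, Cf α) + ∑ α ∈ T', Cf α * t ^ (L α - D)) := by
    intro t ht
    rw [eval_eq']
    have hterm : ∀ α ∈ f.support,
        f.coeff α * ∏ i, (xt t) i ^ (α i) = Cf α * t ^ (L α) := by
      intro α _
      have h1 : ∀ i, (xt t) i ^ (α i) = x₀ i ^ (α i) * t ^ (q i * (α i : ℝ)) := by
        intro i
        rw [hxt]
        show (x₀ i * t ^ (q i)) ^ (α i) = _
        rw [mul_pow]
        congr 1
        rw [← Real.rpow_natCast (t ^ (q i)) (α i), ← Real.rpow_mul ht.le]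
      simp_rw [h1]
      rw [Finset.prod_mul_distrib, prod_rpow_sum ht]
      rw [hCf, hL]
      ring
    rw [Finset.sum_congr rfl hterm]
    rw [← Finset.sum_filter_add_sum_filter_not f.support (fun α => expR α ∈ face q f)]
    rw [← hT, ← hT']
    have hTeq : ∀ α ∈ T, Cf α * t ^ (L α) = Cf α * t ^ D := by
      intro α hα
      rw [hT, Finset.mem_filter] at hα
      have hLD : L α = D := (face_mem_iff q f hα.1).mp hα.2
      rw [hLD]
    have hT'eq : ∀ α ∈ T', Cf α * t ^ (L α) = (Cf α * t ^ (L α - D)) * t ^ D := by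
      intro α hα
      have : L α = (L α - D) + D := by ring
      rw [this, Real.rpow_add ht]
      ring
    rw [Finset.sum_congr rfl hTeq, Finset.sum_congr rfl hT'eq]
    rw [← Finset.sum_mul, ← Finset.sum_mul]
    ring
  -- the bracket tends to eval x₀ g < 0
  have hlim : Tendsto (fun t : ℝ => (∑ α ∈ T, Cf α) + ∑ α ∈ T', Cf α * t ^ (L α - D))
      (nhdsWithin 0 (Set.Ioi 0)) (nhds ((∑ α ∈ T, Cf α) + 0)) := by
    apply Tendsto.add tendsto_const_nhds
    have : Tendsto (fun t : ℝ => ∑ α ∈ T', Cf α * t ^ (L α - D))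
        (nhdsWithin 0 (Set.Ioi 0)) (nhds (∑ α ∈ T', (0:ℝ))) := by
      apply tendsto_finset_sum
      intro α hα
      rw [hT', Finset.mem_filter] at hα
      have hDle : D ≤ L α := hDeq ▸ Finset.inf'_le L hα.1
      have hne : L α ≠ D := fun h => hα.2 ((face_mem_iff q f hα.1).mpr h)
      have hpos : 0 < L α - D := by
        rcases lt_or_eq_of_le hDle with h | h
        · linarith
        · exact absurd h.symm hne
      have h0 := (tendsto_rpow_zero' hpos).const_mul (Cf α)
      simpa using h0
    simpa using this
  rw [add_zero] at hlim
  have hbrneg : ∀ᶠ t in nhdsWithin (0:ℝ) (Set.Ioi 0),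
      (∑ α ∈ T, Cf α) + ∑ α ∈ T', Cf α * t ^ (L α - D) < 0 := by
    apply hlim.eventually_lt_const
    show (∑ α ∈ T, Cf α) < 0
    rw [← hcst]
    exact hcneg
  -- the curve escapes to infinity
  have hx0jpos : 0 < |x₀ j| := abs_pos.mpr (hx0j ▸ hs₀ne)
  have hnormt : Tendsto (fun t : ℝ => |x₀ j| * t ^ (q j)) (nhdsWithin 0 (Set.Ioi 0)) atTop :=
    (rpow_tendsto_atTop' hqj).const_mul_atTop hx0jpos
  have hfar : ∀ᶠ t in nhdsWithin (0:ℝ) (Set.Ioi 0), R ≤ ‖xt t‖ := by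
    filter_upwards [hnormt.eventually_ge_atTop R, self_mem_nhdsWithin] with t h1 h2
    have ht : (0:ℝ) < t := h2
    have habs : |(xt t) j| = |x₀ j| * t ^ (q j) := by
      rw [hxt]
      show |x₀ j * t ^ (q j)| = _
      rw [abs_mul, abs_of_nonneg (Real.rpow_nonneg ht.le _)]
    calc R ≤ |x₀ j| * t ^ (q j) := h1
    _ = |(xt t) j| := habs.symm
    _ = ‖(xt t) j‖ := (Real.norm_eq_abs _).symm
    _ ≤ ‖xt t‖ := norm_le_pi_norm (xt t) j
  obtain ⟨t, hbr, hfar', ht⟩ := (hbrneg.and (hfar.and self_mem_nhdsWithin)).exists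
  have htpos : (0:ℝ) < t := ht
  have hpos := hRfar (xt t) hfar'
  rw [key t htpos] at hpos
  have htD : 0 < t ^ D := Real.rpow_pos_of_pos htpos D
  nlinarith
end

section
/- Let f : ℝⁿ → ℝ be a polynomial with n ≥ 2. Suppose (i) f restricted to every coordinate subspace ℝ^J, J ⊆ {1,…,n}, is not identically zero, and (ii) for every face Δ in the Newton boundary at infinity Γ_∞(f), the face polynomial f_Δ is strictly positive on (ℝ\{0})ⁿ. Then the zero set Z(f) is compact. -/
open MvPolynomial Set Asymptotics Filter

section AuxForStmt4

/-- The pairing `⟨q, α⟩ = ∑ i, q i * α i`. -/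
noncomputable def prq {n : ℕ} (q : Fin n → ℝ) (α : Fin n →₀ ℕ) : ℝ := ∑ i, q i * (α i : ℝ)

lemma prq_expR {n : ℕ} (q : Fin n → ℝ) (α : Fin n →₀ ℕ) :
    (∑ i, q i * expR α i) = prq q α := rfl

lemma prq_add {n : ℕ} (a b : Fin n → ℝ) (α : Fin n →₀ ℕ) :
    prq (a + b) α = prq a α + prq b α := by
  simp [prq, add_mul, Finset.sum_add_distrib]

lemma prq_sub {n : ℕ} (a b : Fin n → ℝ) (α : Fin n →₀ ℕ) :
    prq (a - b) α = prq a α - prq b α := by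
  simp [prq, sub_mul, Finset.sum_sub_distrib]

lemma prq_neg {n : ℕ} (a : Fin n → ℝ) (α : Fin n →₀ ℕ) :
    prq (-a) α = -prq a α := by
  simp [prq]

/-- The pairing as a linear map in `q`. -/
noncomputable def prqL {n : ℕ} (α : Fin n →₀ ℕ) : (Fin n → ℝ) →ₗ[ℝ] ℝ where
  toFun q := prq q α
  map_add' a b := prq_add a b α
  map_smul' c a := by
    simp only [prq, Pi.smul_apply, smul_eq_mul, RingHom.id_apply, Finset.mul_sum]
    exact Finset.sum_congr rfl fun i _ => by ring

lemma continuous_evalf {n : ℕ} (f : MvPolynomial (Fin n) ℝ) :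
    Continuous fun x : Fin n → ℝ => eval x f := by
  have h : (fun x : Fin n → ℝ => eval x f)
      = fun x => ∑ d ∈ f.support, f.coeff d * ∏ i, x i ^ d i := by
    funext x; exact eval_eq' x f
  rw [h]
  exact continuous_finset_sum _ fun d _ =>
    continuous_const.mul <| continuous_finset_prod _ fun i _ => (continuous_apply i).pow _

lemma dMin_eq_and_face {n : ℕ} {q : Fin n → ℝ} {f : MvPolynomial (Fin n) ℝ} {d : ℝ}
    {α₀ : Fin n →₀ ℕ} (hα₀ : α₀ ∈ f.support) (hd : prq q α₀ = d)
    (h2 : ∀ α ∈ f.support, d ≤ prq q α) :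
    dMin q f = d ∧ ∀ α ∈ f.support, (expR α ∈ face q f ↔ prq q α = d) := by
  have hlin : IsLinearMap ℝ (fun x : Fin n → ℝ => ∑ i, q i * x i) := by
    refine ⟨fun a b => by simp [mul_add, Finset.sum_add_distrib], fun c a => ?_⟩
    simp only [Pi.smul_apply, smul_eq_mul, Finset.mul_sum]
    exact Finset.sum_congr rfl fun i _ => by ring
  have hmemN : ∀ β ∈ f.support, expR β ∈ Newton f := fun β hβ =>
    subset_convexHull ℝ _ ⟨β, by simpa using hβ, rfl⟩
  have hlb : ∀ ξ ∈ Newton f, d ≤ ∑ i, q i * ξ i := by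
    intro ξ hξ
    have hsub : expR '' (f.support : Set (Fin n →₀ ℕ))
        ⊆ {x : Fin n → ℝ | d ≤ ∑ i, q i * x i} := by
      rintro _ ⟨α, hα, rfl⟩
      simpa [prq_expR] using h2 α (by simpa using hα)
    exact convexHull_min hsub (convex_halfSpace_ge hlin d) hξ
  have hleast : IsLeast ((fun α : Fin n → ℝ => ∑ i, q i * α i) '' Newton f) d := by
    constructor
    · refine ⟨expR α₀, hmemN α₀ hα₀, ?_⟩
      show (∑ i, q i * expR α₀ i) = d
      rw [prq_expR]; exact hd
    · rintro y ⟨ξ, hξ, rfl⟩; exact hlb ξ hξ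
  have hdmin : dMin q f = d := hleast.csInf_eq
  refine ⟨hdmin, fun α hα => ?_⟩
  simp only [face, Set.mem_sep_iff, prq_expR, hdmin]
  exact ⟨fun h => h.2, fun h => ⟨hmemN α hα, h⟩⟩

lemma mem_range_of_tendsto {E : Type*} [NormedAddCommGroup E] [NormedSpace ℝ E]
    {ι : Type*} [Fintype ι]
    (L : E →ₗ[ℝ] (ι → ℝ)) (𝒰 : Ultrafilter ℕ) (z : ℕ → E) (lam : ι → ℝ)
    (h : Filter.Tendsto (fun k => L (z k)) (↑𝒰) (nhds lam)) : ∃ v, L v = lam := by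
  have hcl : IsClosed ((LinearMap.range L : Submodule ℝ (ι → ℝ)) : Set (ι → ℝ)) :=
    Submodule.closed_of_finiteDimensional _
  have hmem : lam ∈ ((LinearMap.range L : Submodule ℝ (ι → ℝ)) : Set (ι → ℝ)) :=
    hcl.mem_of_tendsto h (Filter.Eventually.of_forall fun k => ⟨z k, rfl⟩)
  exact hmem

lemma exists_proj_ker {E F : Type*} [AddCommGroup E] [Module ℝ E] [AddCommGroup F] [Module ℝ F]
    (L : E →ₗ[ℝ] F) :
    ∃ (Pr : E → E) (g : F →ₗ[ℝ] E), (∀ u, L (Pr u) = 0) ∧ (∀ u, u - Pr u = g (L u)) := by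
  obtain ⟨W, hW⟩ := Submodule.exists_isCompl (LinearMap.ker L)
  set K := LinearMap.ker L with hK
  have hinj : LinearMap.ker (L.comp W.subtype) = ⊥ := by
    ext w
    simp only [LinearMap.mem_ker, LinearMap.comp_apply, Submodule.coe_subtype,
      Submodule.mem_bot]
    constructor
    · intro hw
      exact Subtype.ext (Submodule.disjoint_def.mp hW.disjoint _ hw w.2)
    · rintro rfl; simp
  obtain ⟨g', hg'⟩ := (L.comp W.subtype).exists_leftInverse_of_injective hinj
  refine ⟨fun u => (K.linearProjOfIsCompl W hW u : E), W.subtype.comp g',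
    fun u => ?_, fun u => ?_⟩
  · exact LinearMap.mem_ker.mp (K.linearProjOfIsCompl W hW u).2
  · have hdecomp : (K.linearProjOfIsCompl W hW u : E) + (W.linearProjOfIsCompl K hW.symm u : E) = u :=
      Submodule.projection_add_projection_eq_self hW u
    have h1 : u - (K.linearProjOfIsCompl W hW u : E)
        = (W.linearProjOfIsCompl K hW.symm u : E) :=
      sub_eq_of_eq_add' hdecomp.symm
    rw [h1]
    have h2 : L u = (L.comp W.subtype) (W.linearProjOfIsCompl K hW.symm u) := by
      conv_lhs => rw [← hdecomp]
      have hz : L ((K.linearProjOfIsCompl W hW u : E)) = 0 :=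
        LinearMap.mem_ker.mp (K.linearProjOfIsCompl W hW u).2
      simp [map_add, hz]
    rw [h2]
    have h3 := LinearMap.ext_iff.mp hg' (W.linearProjOfIsCompl K hW.symm u)
    simpa using (congrArg W.subtype h3).symm

end AuxForStmt4

theorem stmt4 {n : ℕ} (hn : 2 ≤ n) (f : MvPolynomial (Fin n) ℝ)
    (hJ : ∀ J : Set (Fin n), ∃ x : Fin n → ℝ, (∀ j ∉ J, x j = 0) ∧ eval x f ≠ 0)
    (hpos : ∀ Δ ∈ NewtonBoundary f, ∀ x : Fin n → ℝ, (∀ i, x i ≠ 0) →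
      0 < eval x (trunc f Δ)) :
    IsCompact {x : Fin n → ℝ | eval x f = 0} := by
  classical
  rw [Metric.isCompact_iff_isClosed_bounded]
  refine ⟨isClosed_eq (continuous_evalf f) continuous_const, ?_⟩
  by_contra hub
  have hx : ∀ k : ℕ, ∃ x : Fin n → ℝ, eval x f = 0 ∧ (k : ℝ) < ‖x‖ := by
    intro k
    by_contra hcon
    push_neg at hcon
    exact hub (isBounded_iff_forall_norm_le.mpr ⟨k, fun x hxx => hcon x hxx⟩)
  choose x hx0 hxn using hx
  set 𝒰 : Ultrafilter ℕ := Ultrafilter.of atTop with h𝒰def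
  have h𝒰 : (𝒰 : Filter ℕ) ≤ atTop := Ultrafilter.of_le _
  have hnorm : Tendsto (fun k => ‖x k‖) (↑𝒰) atTop :=
    tendsto_atTop_mono (fun k => (hxn k).le)
      ((tendsto_natCast_atTop_atTop (R := ℝ)).mono_left h𝒰)
  -- 0 is an exponent of f
  have h0S : (0 : Fin n →₀ ℕ) ∈ f.support := by
    obtain ⟨x₀, hx₀, hne⟩ := hJ ∅
    have hx0' : x₀ = 0 := funext fun j => hx₀ j (Set.notMem_empty j)
    rw [hx0'] at hne
    rw [mem_support_iff]
    intro hc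
    apply hne
    have h1 : eval (0 : Fin n → ℝ) f = constantCoeff f := by
      rw [MvPolynomial.eval_zero]
    rw [h1]
    rwa [show constantCoeff f = MvPolynomial.coeff 0 f from rfl]
  -- the set of "surviving" coordinates
  set J : Set (Fin n) := {i | {k | x k i ≠ 0} ∈ 𝒰} with hJdef
  have hJzero : ∀ i, i ∉ J → {k | x k i = 0} ∈ 𝒰 := by
    intro i hi
    have h1 : {k | x k i ≠ 0} ∉ 𝒰 := hi
    have := Ultrafilter.compl_mem_iff_notMem.mpr h1
    simpa [Set.compl_setOf] using this
  -- signs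
  set σs : Fin n → ℝ := fun i => if {k | 0 < x k i} ∈ 𝒰 then 1 else -1 with hσdef
  have hσne : ∀ i, σs i ≠ 0 := by
    intro i; rw [hσdef]
    by_cases hcs : {k | 0 < x k i} ∈ 𝒰 <;> simp [hcs]
  have hσsign : ∀ i ∈ J, ∀ᶠ k in (𝒰 : Filter ℕ), x k i = σs i * |x k i| := by
    intro i hi
    by_cases hcs : {k | 0 < x k i} ∈ 𝒰
    · have hev : ∀ᶠ k in (𝒰 : Filter ℕ), 0 < x k i := hcs
      filter_upwards [hev] with k hk
      rw [hσdef]; simp only [hcs, if_true]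
      rw [abs_of_pos hk, one_mul]
    · have hc : {k | ¬ 0 < x k i} ∈ 𝒰 := by
        have := Ultrafilter.compl_mem_iff_notMem.mpr hcs
        simpa [Set.compl_setOf] using this
      have hne : {k | x k i ≠ 0} ∈ 𝒰 := hi
      have hev1 : ∀ᶠ k in (𝒰 : Filter ℕ), ¬ 0 < x k i := hc
      have hev2 : ∀ᶠ k in (𝒰 : Filter ℕ), x k i ≠ 0 := hne
      filter_upwards [hev1, hev2] with k hk hkne
      have hlt : x k i < 0 := lt_of_le_of_ne (not_lt.mp hk) hkne
      rw [hσdef]; simp only [hcs, if_false]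
      rw [abs_of_neg hlt]; ring
  -- logs
  set u : ℕ → Fin n → ℝ := fun k i => Real.log |x k i| with hudef
  set SJ : Finset (Fin n →₀ ℕ) := f.support.filter (fun α => ∀ i, i ∉ J → α i = 0)
    with hSJdef
  have hSJsub : ∀ α ∈ SJ, α ∈ f.support := fun α hα => (Finset.mem_filter.mp hα).1
  have hSJz : ∀ α ∈ SJ, ∀ i, i ∉ J → α i = 0 := fun α hα => (Finset.mem_filter.mp hα).2
  have h0SJ : (0 : Fin n →₀ ℕ) ∈ SJ := by
    rw [hSJdef, Finset.mem_filter]; exact ⟨h0S, fun i _ => rfl⟩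
  have hSJne : SJ.Nonempty := ⟨0, h0SJ⟩
  set hh : ℕ → ℝ := fun k => SJ.sup' hSJne (fun α => prq (u k) α) with hhdef
  set w' : ℕ → (Fin n →₀ ℕ) → ℝ := fun k α => Real.exp (prq (u k) α - hh k) with hw'def
  have hw'pos : ∀ k α, 0 < w' k α := fun k α => Real.exp_pos _
  have hw'le : ∀ k, ∀ α ∈ SJ, w' k α ≤ 1 := by
    intro k α hα
    rw [hw'def]
    exact Real.exp_le_one_iff.mpr (sub_nonpos.mpr (Finset.le_sup' (fun α => prq (u k) α) hα))
  -- ultrafilter limits of the normalized monomials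
  have hwex : ∀ α : Fin n →₀ ℕ, ∃ c : ℝ, α ∈ SJ →
      (Tendsto (fun k => w' k α) (↑𝒰) (nhds c) ∧ 0 ≤ c ∧ c ≤ 1) := by
    intro α
    by_cases hα : α ∈ SJ
    · obtain ⟨c, hc, hlim⟩ := (isCompact_Icc (a := (0:ℝ)) (b := 1)).ultrafilter_le_nhds
        (𝒰.map (fun k => w' k α)) (by
          rw [le_principal_iff, Ultrafilter.coe_map, Filter.mem_map]
          exact Filter.univ_mem' fun k => ⟨(hw'pos k α).le, hw'le k α hα⟩)
      refine ⟨c, fun _ => ⟨?_, hc.1, hc.2⟩⟩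
      rw [Filter.Tendsto, ← Ultrafilter.coe_map]; exact hlim
    · exact ⟨0, fun hcc => absurd hcc hα⟩
  choose w hw using hwex
  -- the maximal exponent
  have hUmem : (⋃ α ∈ (SJ : Set (Fin n →₀ ℕ)), {k | hh k = prq (u k) α}) ∈ 𝒰 := by
    apply Filter.univ_mem'
    intro k
    obtain ⟨α, hα, hval⟩ := Finset.exists_mem_eq_sup' hSJne (fun α => prq (u k) α)
    exact Set.mem_biUnion hα hval
  obtain ⟨α₀, hα₀c, hα₀mem⟩ := (Ultrafilter.finite_biUnion_mem_iff (SJ.finite_toSet)).mp hUmem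
  have hα₀SJ : α₀ ∈ SJ := hα₀c
  have hwα₀ : w α₀ = 1 := by
    have h1 : Tendsto (fun k => w' k α₀) (↑𝒰) (nhds (w α₀)) := (hw α₀ hα₀SJ).1
    have h2 : (fun k => w' k α₀) =ᶠ[(𝒰 : Filter ℕ)] fun _ => 1 := by
      have hev : ∀ᶠ k in (𝒰 : Filter ℕ), hh k = prq (u k) α₀ := hα₀mem
      filter_upwards [hev] with k hk
      rw [hw'def]; simp only [hk, sub_self, Real.exp_zero]
    exact tendsto_nhds_unique (h1.congr' h2) tendsto_const_nhds
  -- the escaping coordinate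
  have hUmem2 : (⋃ i ∈ (Finset.univ : Finset (Fin n)),
      {k | ∀ i', |x k i'| ≤ |x k i|}) ∈ 𝒰 := by
    apply Filter.univ_mem'
    intro k
    have hne : (Finset.univ : Finset (Fin n)).Nonempty := ⟨⟨0, by omega⟩, Finset.mem_univ _⟩
    obtain ⟨i, hi, hval⟩ := Finset.exists_mem_eq_sup' hne (fun i => |x k i|)
    refine Set.mem_biUnion hi ?_
    intro i'
    rw [← hval]
    exact Finset.le_sup' (fun i => |x k i|) (Finset.mem_univ i')
  obtain ⟨i₀, -, hi₀mem⟩ :=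
    (Ultrafilter.finite_biUnion_mem_iff (Finset.univ : Finset (Fin n)).finite_toSet).mp hUmem2
  have hxi₀ : Tendsto (fun k => |x k i₀|) (↑𝒰) atTop := by
    have hle : (fun k => ‖x k‖) ≤ᶠ[(𝒰 : Filter ℕ)] fun k => |x k i₀| := by
      have hev : ∀ᶠ k in (𝒰 : Filter ℕ), ∀ i', |x k i'| ≤ |x k i₀| := hi₀mem
      filter_upwards [hev] with k hk
      refine (pi_norm_le_iff_of_nonneg (abs_nonneg _)).mpr fun i => ?_
      simpa [Real.norm_eq_abs] using hk i
    exact tendsto_atTop_mono' _ hle hnorm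
  have hui₀ : Tendsto (fun k => u k i₀) (↑𝒰) atTop := Real.tendsto_log_atTop.comp hxi₀
  have hi₀J : i₀ ∈ J := by
    rw [hJdef]
    have hev : ∀ᶠ k in (𝒰 : Filter ℕ), (1:ℝ) ≤ |x k i₀| := hxi₀.eventually (eventually_ge_atTop 1)
    have : ∀ᶠ k in (𝒰 : Filter ℕ), x k i₀ ≠ 0 := by
      filter_upwards [hev] with k hk
      intro h0
      rw [h0] at hk; simp at hk; linarith
    exact this
  -- the limit equation
  have hkey : ∀ᶠ k in (𝒰 : Filter ℕ),
      ∑ α ∈ SJ, (f.coeff α * ∏ i, σs i ^ (α i)) * w' k α = 0 := by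
    have hzero : ∀ᶠ k in (𝒰 : Filter ℕ), ∀ i, i ∉ J → x k i = 0 := by
      rw [eventually_all]
      intro i
      by_cases hi : i ∈ J
      · exact Filter.Eventually.of_forall fun k hcon => absurd hi hcon
      · have hev : ∀ᶠ k in (𝒰 : Filter ℕ), x k i = 0 := hJzero i hi
        exact hev.mono fun k hk _ => hk
    have hsgn : ∀ᶠ k in (𝒰 : Filter ℕ), ∀ i, i ∈ J → (x k i = σs i * |x k i| ∧ x k i ≠ 0) := by
      rw [eventually_all]
      intro i
      by_cases hi : i ∈ J
      · have hev2 : ∀ᶠ k in (𝒰 : Filter ℕ), x k i ≠ 0 := hi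
        filter_upwards [hσsign i hi, hev2] with k hk1 hk2
        exact fun _ => ⟨hk1, hk2⟩
      · exact Filter.Eventually.of_forall fun k hcon => absurd hcon hi
    filter_upwards [hzero, hsgn] with k hk0 hks
    have he : (0:ℝ) = ∑ α ∈ f.support, f.coeff α * ∏ i, x k i ^ α i := by
      rw [← eval_eq']; exact (hx0 k).symm
    have hsplit : ∑ α ∈ f.support, f.coeff α * ∏ i, x k i ^ α i
        = ∑ α ∈ SJ, f.coeff α * ∏ i, x k i ^ α i := by
      rw [hSJdef,
        ← Finset.sum_filter_add_sum_filter_not f.support (fun α => ∀ i, i ∉ J → α i = 0)]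
      have hz : ∑ α ∈ f.support.filter (fun α => ¬ ∀ i, i ∉ J → α i = 0),
          f.coeff α * ∏ i, x k i ^ α i = 0 := by
        apply Finset.sum_eq_zero
        intro α hα
        rw [Finset.mem_filter] at hα
        have := hα.2
        push_neg at this
        obtain ⟨i, hiJ, hαi⟩ := this
        have hxz : x k i = 0 := hk0 i hiJ
        have hprod : ∏ i', x k i' ^ α i' = 0 :=
          Finset.prod_eq_zero (Finset.mem_univ i) (by rw [hxz]; exact zero_pow hαi)
        rw [hprod, mul_zero]
      rw [hz, add_zero]
    have hterm : ∀ α ∈ SJ, (∏ i, x k i ^ α i)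
        = (∏ i, σs i ^ α i) * Real.exp (prq (u k) α) := by
      intro α hα
      have hfac : ∀ i, x k i ^ α i = σs i ^ α i * Real.exp ((α i : ℝ) * u k i) := by
        intro i
        by_cases hiJ : i ∈ J
        · obtain ⟨hsgn_i, hne_i⟩ := hks i hiJ
          have habs : (0:ℝ) < |x k i| := abs_pos.mpr hne_i
          calc x k i ^ α i = (σs i * |x k i|) ^ α i := by rw [← hsgn_i]
            _ = σs i ^ α i * |x k i| ^ α i := mul_pow _ _ _
            _ = σs i ^ α i * Real.exp ((α i : ℝ) * u k i) := by
                rw [hudef]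
                rw [Real.exp_nat_mul, Real.exp_log habs]
        · have hz : α i = 0 := hSJz α hα i hiJ
          simp [hz]
      rw [Finset.prod_congr rfl (fun i _ => hfac i), Finset.prod_mul_distrib]
      congr 1
      rw [← Real.exp_sum]
      congr 1
      rw [prq]
      exact Finset.sum_congr rfl fun i _ => mul_comm _ _
    have hmain : ∑ α ∈ SJ, (f.coeff α * ∏ i, σs i ^ (α i)) * w' k α
        = Real.exp (-(hh k)) * ∑ α ∈ SJ, f.coeff α * ∏ i, x k i ^ α i := by
      rw [Finset.mul_sum]
      apply Finset.sum_congr rfl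
      intro α hα
      rw [hterm α hα, hw'def]
      simp only []
      rw [show prq (u k) α - hh k = -(hh k) + prq (u k) α by ring, Real.exp_add]
      ring
    rw [hmain, ← hsplit, ← he, mul_zero]
  have hsum0 : ∑ α ∈ SJ, (f.coeff α * ∏ i, σs i ^ (α i)) * w α = 0 := by
    have hlim : Tendsto (fun k => ∑ α ∈ SJ, (f.coeff α * ∏ i, σs i ^ (α i)) * w' k α) (↑𝒰)
        (nhds (∑ α ∈ SJ, (f.coeff α * ∏ i, σs i ^ (α i)) * w α)) :=
      tendsto_finset_sum _ fun α hα => tendsto_const_nhds.mul ((hw α hα).1)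
    exact (tendsto_nhds_unique (hlim.congr' hkey) tendsto_const_nhds).symm ▸ rfl
  -- the face exponents
  set T : Finset (Fin n →₀ ℕ) := SJ.filter (fun α => 0 < w α) with hTdef
  have hTsub : ∀ α ∈ T, α ∈ SJ := fun α hα => (Finset.mem_filter.mp hα).1
  have hTpos : ∀ α ∈ T, 0 < w α := fun α hα => (Finset.mem_filter.mp hα).2
  have hα₀T : α₀ ∈ T := by
    rw [hTdef, Finset.mem_filter]
    exact ⟨hα₀SJ, by rw [hwα₀]; norm_num⟩
  have hTsum : ∑ α ∈ T, (f.coeff α * ∏ i, σs i ^ (α i)) * w α = 0 := by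
    rw [← Finset.sum_filter_add_sum_filter_not SJ (fun α => 0 < w α)] at hsum0
    have hz2 : ∑ α ∈ SJ.filter (fun α => ¬ 0 < w α),
        (f.coeff α * ∏ i, σs i ^ (α i)) * w α = 0 := by
      apply Finset.sum_eq_zero
      intro α hα
      rw [Finset.mem_filter] at hα
      have hw0 : w α = 0 := le_antisymm (not_lt.mp hα.2) ((hw α hα.1).2.1)
      rw [hw0, mul_zero]
    rw [hz2, add_zero] at hsum0
    rw [hTdef]
    exact hsum0
  -- linear algebra: projection to the kernel of the difference pairing
  set L : (Fin n → ℝ) →ₗ[ℝ] ({a : Fin n →₀ ℕ // a ∈ T} → ℝ) :=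
    LinearMap.pi (fun α => prqL α.1 - prqL α₀) with hLdef
  have hLapp : ∀ (v : Fin n → ℝ) (α : {a : Fin n →₀ ℕ // a ∈ T}),
      L v α = prq v α.1 - prq v α₀ := fun v α => rfl
  obtain ⟨Pr, g, hPr, hg⟩ := exists_proj_ker L
  set lam : {a : Fin n →₀ ℕ // a ∈ T} → ℝ := fun α => Real.log (w α.1) with hlamdef
  have hLval : ∀ k β, prq (u k) β - hh k = Real.log (w' k β) := by
    intro k β; rw [hw'def]; rw [Real.log_exp]
  have hlog1 : Tendsto (fun k => Real.log (w' k α₀)) (↑𝒰) (nhds 0) := by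
    have h1 := ((Real.continuousAt_log (by rw [hwα₀]; norm_num)).tendsto).comp (hw α₀ hα₀SJ).1
    simpa [hwα₀, Function.comp_def] using h1
  have hlogT : ∀ α ∈ T, Tendsto (fun k => Real.log (w' k α)) (↑𝒰) (nhds (Real.log (w α))) := by
    intro α hα
    exact ((Real.continuousAt_log (ne_of_gt (hTpos α hα))).tendsto).comp (hw α (hTsub α hα)).1
  have hLu : Tendsto (fun k => L (u k)) (↑𝒰) (nhds lam) := by
    rw [tendsto_pi_nhds]
    intro α
    have hcomp : ∀ k, L (u k) α = Real.log (w' k α.1) - Real.log (w' k α₀) := by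
      intro k
      rw [hLapp, ← hLval k α.1, ← hLval k α₀]; ring
    have h1 := (hlogT α.1 α.2).sub hlog1
    rw [hlamdef]
    simpa [sub_zero] using h1.congr fun k => (hcomp k).symm
  have hgu : Tendsto (fun k => u k - Pr (u k)) (↑𝒰) (nhds (g lam)) := by
    have hgc : Continuous g := g.continuous_of_finiteDimensional
    exact ((hgc.tendsto lam).comp hLu).congr fun k => (hg (u k)).symm
  have hprcont : ∀ (β : Fin n →₀ ℕ), Tendsto (fun k => prq (u k - Pr (u k)) β) (↑𝒰)
      (nhds (prq (g lam) β)) := by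
    intro β
    have hc : Continuous fun v : Fin n → ℝ => prq v β := (prqL β).continuous_of_finiteDimensional
    exact (hc.tendsto _).comp hgu
  have hvβ : ∀ β ∈ SJ, β ∉ T →
      ∀ᶠ k in (𝒰 : Filter ℕ), prq (Pr (u k)) β - prq (Pr (u k)) α₀ < 0 := by
    intro β hβ hβT
    have hwβ : w β = 0 := by
      have hnp : ¬ 0 < w β := fun hc => hβT (by rw [hTdef, Finset.mem_filter]; exact ⟨hβ, hc⟩)
      exact le_antisymm (not_lt.mp hnp) ((hw β hβ).2.1)
    have hlogβ : Tendsto (fun k => Real.log (w' k β)) (↑𝒰) atBot := by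
      apply Real.tendsto_log_nhdsGT_zero.comp
      rw [tendsto_nhdsWithin_iff]
      constructor
      · have h1 := (hw β hβ).1; rwa [hwβ] at h1
      · exact Filter.Eventually.of_forall fun k => hw'pos k β
    have e1 : ∀ᶠ k in (𝒰 : Filter ℕ),
        Real.log (w' k β) < (prq (g lam) β - prq (g lam) α₀) - 2 :=
      hlogβ.eventually (eventually_lt_atBot _)
    have e2 : ∀ᶠ k in (𝒰 : Filter ℕ), (-1:ℝ) < Real.log (w' k α₀) :=
      hlog1.eventually_const_lt (by norm_num)
    have e3 : ∀ᶠ k in (𝒰 : Filter ℕ),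
        (prq (g lam) β - prq (g lam) α₀) - 1
          < prq (u k - Pr (u k)) β - prq (u k - Pr (u k)) α₀ := by
      have h1 := (hprcont β).sub (hprcont α₀)
      exact h1.eventually_const_lt (by linarith)
    filter_upwards [e1, e2, e3] with k h1 h2 h3
    have hid : prq (Pr (u k)) β - prq (Pr (u k)) α₀
        = (prq (u k) β - prq (u k) α₀)
          - (prq (u k - Pr (u k)) β - prq (u k - Pr (u k)) α₀) := by
      rw [prq_sub, prq_sub]; ring
    have hql : prq (u k) β - prq (u k) α₀ = Real.log (w' k β) - Real.log (w' k α₀) := by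
      rw [← hLval k β, ← hLval k α₀]; ring
    rw [hid, hql]
    linarith
  have hvi₀ : ∀ᶠ k in (𝒰 : Filter ℕ), 0 < Pr (u k) i₀ := by
    have e1 : ∀ᶠ k in (𝒰 : Filter ℕ), (g lam) i₀ + 1 < u k i₀ :=
      hui₀.eventually (eventually_gt_atTop _)
    have e2 : ∀ᶠ k in (𝒰 : Filter ℕ), (u k - Pr (u k)) i₀ < (g lam) i₀ + 1 := by
      have h1 : Tendsto (fun k => (u k - Pr (u k)) i₀) (↑𝒰) (nhds ((g lam) i₀)) :=
        ((continuous_apply i₀).tendsto _).comp hgu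
      exact h1.eventually_lt_const (by linarith)
    filter_upwards [e1, e2] with k h1 h2
    have h3 : (u k - Pr (u k)) i₀ = u k i₀ - Pr (u k) i₀ := rfl
    rw [h3] at h2
    linarith
  have hallev : ∀ᶠ k in (𝒰 : Filter ℕ),
      ((∀ β ∈ SJ, β ∉ T → prq (Pr (u k)) β - prq (Pr (u k)) α₀ < 0) ∧ 0 < Pr (u k) i₀) := by
    refine Filter.Eventually.and ?_ hvi₀
    rw [Filter.eventually_all_finset]
    intro β hβ
    by_cases hβT : β ∈ T
    · exact Filter.Eventually.of_forall fun k hc => absurd hβT hc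
    · exact (hvβ β hβ hβT).mono fun k hk _ => hk
  obtain ⟨k₀, hk₀⟩ := hallev.exists
  -- the exposing direction
  set q₀ : Fin n → ℝ := -(Pr (u k₀)) with hq₀def
  have hprq₀ : ∀ β, prq q₀ β = -prq (Pr (u k₀)) β := fun β => prq_neg _ β
  set d : ℝ := prq q₀ α₀ with hddef
  have hq₀T : ∀ α ∈ T, prq q₀ α = d := by
    intro α hα
    have h1 : L (Pr (u k₀)) ⟨α, hα⟩ = 0 := by rw [hPr (u k₀)]; rfl
    rw [hLapp] at h1
    rw [hddef, hprq₀, hprq₀]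
    linarith
  have hq₀β : ∀ β ∈ SJ, β ∉ T → d < prq q₀ β := by
    intro β hβ hβT
    have h1 := hk₀.1 β hβ hβT
    rw [hddef, hprq₀, hprq₀]
    linarith
  have hq₀i₀ : q₀ i₀ < 0 := by
    rw [hq₀def]
    simp only [Pi.neg_apply, neg_lt_zero]
    exact hk₀.2
  -- correct the direction outside J
  have hSne : f.support.Nonempty := ⟨0, h0S⟩
  set M : ℝ := 1 + max (f.support.sup' hSne (fun β => d - prq q₀ β)) 0 with hMdef
  have hM0 : 0 ≤ M := by
    have h1 := le_max_right (f.support.sup' hSne (fun β => d - prq q₀ β)) (0:ℝ)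
    rw [hMdef]; linarith
  have hMβ : ∀ β ∈ f.support, d - prq q₀ β + 1 ≤ M := by
    intro β hβ
    have h1 := Finset.le_sup' (fun β => d - prq q₀ β) hβ
    have h2 := le_max_left (f.support.sup' hSne (fun β => d - prq q₀ β)) (0:ℝ)
    rw [hMdef]; linarith
  set q : Fin n → ℝ := fun i => q₀ i + (if i ∈ J then 0 else M) with hqdef
  have hqsplit : ∀ β : Fin n →₀ ℕ,
      prq q β = prq q₀ β + ∑ i, (if i ∈ J then (0:ℝ) else M) * (β i : ℝ) := by
    intro β
    simp only [hqdef, prq, add_mul, Finset.sum_add_distrib]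
  have hqSJ : ∀ α ∈ SJ, prq q α = prq q₀ α := by
    intro α hα
    rw [hqsplit]
    have hz : ∑ i, (if i ∈ J then (0:ℝ) else M) * (α i : ℝ) = 0 := by
      apply Finset.sum_eq_zero
      intro i _
      by_cases hi : i ∈ J
      · simp [hi]
      · rw [hSJz α hα i hi]; simp
    rw [hz, add_zero]
  have hqout : ∀ β ∈ f.support, β ∉ SJ → d + 1 ≤ prq q β := by
    intro β hβ hβSJ
    have hex : ∃ i, i ∉ J ∧ β i ≠ 0 := by
      by_contra hc
      push_neg at hc
      exact hβSJ (by rw [hSJdef, Finset.mem_filter]; exact ⟨hβ, fun i hi => hc i hi⟩)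
    obtain ⟨i₁, hi₁J, hi₁β⟩ := hex
    have hsumge : M ≤ ∑ i, (if i ∈ J then (0:ℝ) else M) * (β i : ℝ) := by
      have hterm : M ≤ (if i₁ ∈ J then (0:ℝ) else M) * (β i₁ : ℝ) := by
        rw [if_neg hi₁J]
        have hc1 : (1:ℝ) ≤ (β i₁ : ℝ) := by exact_mod_cast Nat.one_le_iff_ne_zero.mpr hi₁β
        nlinarith
      refine le_trans hterm (Finset.single_le_sum (f := fun i => (if i ∈ J then (0:ℝ) else M) * (β i : ℝ)) (fun i _ => ?_) (Finset.mem_univ i₁))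
      refine mul_nonneg ?_ (Nat.cast_nonneg _)
      by_cases hi : i ∈ J
      · simp [hi]
      · simp [hi, hM0]
    rw [hqsplit]
    have h1 := hMβ β hβ
    linarith
  have hqα₀ : prq q α₀ = d := by rw [hqSJ α₀ hα₀SJ, hddef]
  have hqlb : ∀ α ∈ f.support, d ≤ prq q α := by
    intro α hα
    by_cases hαSJ : α ∈ SJ
    · rw [hqSJ α hαSJ]
      by_cases hαT : α ∈ T
      · rw [hq₀T α hαT]
      · exact (hq₀β α hαSJ hαT).le
    · linarith [hqout α hα hαSJ]
  have hqgt : ∀ α ∈ f.support, α ∉ T → d < prq q α := by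
    intro α hα hαT
    by_cases hαSJ : α ∈ SJ
    · rw [hqSJ α hαSJ]; exact hq₀β α hαSJ hαT
    · linarith [hqout α hα hαSJ]
  have hqi₀ : q i₀ < 0 := by
    have h1 : q i₀ = q₀ i₀ + (if i₀ ∈ J then (0:ℝ) else M) := by rw [hqdef]
    rw [h1, if_pos hi₀J, add_zero]
    exact hq₀i₀
  -- the face
  obtain ⟨hdmin, hface⟩ := dMin_eq_and_face (hSJsub α₀ hα₀SJ) hqα₀ hqlb
  have hΔmem : face q f ∈ NewtonBoundary f := ⟨q, ⟨i₀, hqi₀⟩, rfl⟩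
  have hfilter : f.support.filter (fun α => expR α ∈ face q f) = T := by
    ext α
    simp only [Finset.mem_filter]
    constructor
    · rintro ⟨hαS, hαface⟩
      have h1 := (hface α hαS).mp hαface
      by_contra hαT
      exact absurd h1 (ne_of_gt (hqgt α hαS hαT))
    · intro hαT
      have hαS : α ∈ f.support := hSJsub α (hTsub α hαT)
      refine ⟨hαS, (hface α hαS).mpr ?_⟩
      rw [hqSJ α (hTsub α hαT), hq₀T α hαT]
  -- realize the limit ratios by an actual point
  set Φ : ((Fin n → ℝ) × ℝ) →ₗ[ℝ] ({a : Fin n →₀ ℕ // a ∈ T} → ℝ) :=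
    LinearMap.pi (fun α => (prqL α.1).comp (LinearMap.fst ℝ (Fin n → ℝ) ℝ)
      + LinearMap.snd ℝ (Fin n → ℝ) ℝ) with hΦdef
  have hΦapp : ∀ (v : (Fin n → ℝ) × ℝ) (α : {a : Fin n →₀ ℕ // a ∈ T}),
      Φ v α = prq v.1 α.1 + v.2 := fun v α => rfl
  have hΦlim : Tendsto (fun k => Φ (u k, -(hh k))) (↑𝒰) (nhds lam) := by
    rw [tendsto_pi_nhds]
    intro α
    have hcomp : ∀ k, Φ (u k, -(hh k)) α = Real.log (w' k α.1) := by
      intro k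
      rw [hΦapp, ← hLval k α.1]; ring
    have h1 := hlogT α.1 α.2
    rw [hlamdef]
    exact h1.congr fun k => (hcomp k).symm
  obtain ⟨vc, hvc⟩ := mem_range_of_tendsto Φ 𝒰 (fun k => (u k, -(hh k))) lam hΦlim
  have hust : ∀ α, (hα : α ∈ T) → prq vc.1 α + vc.2 = Real.log (w α) := by
    intro α hα
    have h1 := congrFun hvc ⟨α, hα⟩
    rw [hΦapp] at h1
    exact h1
  -- the witness point
  set y : Fin n → ℝ := fun i => if i ∈ J then σs i * Real.exp (vc.1 i) else 1 with hydef
  have hyne : ∀ i, y i ≠ 0 := by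
    intro i
    rw [hydef]
    by_cases hi : i ∈ J
    · simp only [hi, if_true]
      exact mul_ne_zero (hσne i) (Real.exp_ne_zero _)
    · simp [hi]
  have hyprod : ∀ α ∈ T, (∏ i, y i ^ α i)
      = (∏ i, σs i ^ (α i)) * (w α * Real.exp (-vc.2)) := by
    intro α hα
    have hαSJ : α ∈ SJ := hTsub α hα
    have hfac : ∀ i, y i ^ α i = σs i ^ α i * Real.exp ((α i : ℝ) * vc.1 i) := by
      intro i
      by_cases hi : i ∈ J
      · have h1 : y i = σs i * Real.exp (vc.1 i) := by rw [hydef]; simp [hi]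
        rw [h1, mul_pow, ← Real.exp_nat_mul]
      · have hz : α i = 0 := hSJz α hαSJ i hi
        have h1 : y i = 1 := by rw [hydef]; simp [hi]
        rw [h1, hz]; simp
    rw [Finset.prod_congr rfl (fun i _ => hfac i), Finset.prod_mul_distrib]
    congr 1
    rw [← Real.exp_sum]
    have hsum : ∑ i, (α i : ℝ) * vc.1 i = Real.log (w α) - vc.2 := by
      have h1 : prq vc.1 α = ∑ i, (α i : ℝ) * vc.1 i := by
        rw [prq]; exact Finset.sum_congr rfl fun i _ => mul_comm _ _
      have h2 := hust α hα
      rw [← h1]; linarith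
    rw [hsum, Real.exp_sub, Real.exp_log (hTpos α hα), Real.exp_neg]
    ring
  -- evaluate the truncation at the witness
  have heval : eval y (trunc f (face q f)) = 0 := by
    have htr : trunc f (face q f) = ∑ α ∈ T, monomial α (f.coeff α) := by
      unfold trunc
      rw [← hfilter]
    rw [htr, map_sum]
    have hterm2 : ∀ α ∈ T, eval y ((monomial α) (f.coeff α))
        = ((f.coeff α * ∏ i, σs i ^ (α i)) * w α) * Real.exp (-vc.2) := by
      intro α hα
      rw [eval_monomial, Finsupp.prod_pow, hyprod α hα]
      ring
    rw [Finset.sum_congr rfl hterm2, ← Finset.sum_mul, hTsum, zero_mul]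
  have hcontr := hpos (face q f) hΔmem y hyne
  rw [heval] at hcontr
  exact lt_irrefl 0 hcontr
end

section
/- Let f : ℝⁿ → ℝ be a nonconstant polynomial, let V be the set of vertices of its Newton polyhedron Γ(f), and define 𝒫(x) = Σ_{α ∈ Γ(f) ∩ ℤ₊ⁿ} |x^α| and 𝒫̃(x) = Σ_{v ∈ V} |x^v|. Then there exist positive constants c₁, c₂ such that c₁𝒫(x) ≤ 𝒫̃(x) ≤ c₂𝒫(x) for all x ∈ ℝⁿ. -/
open MvPolynomial Set Asymptotics Filter

/-- `𝒫̃(x) = Σ_{v vertex of Γ(f)} |x^v|`. -/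
noncomputable def Ptilde {n : ℕ} (f : MvPolynomial (Fin n) ℝ) (x : Fin n → ℝ) : ℝ :=
  ∑' α : {α : Fin n →₀ ℕ // expR α ∈ Set.extremePoints ℝ (Newton f)},
    |∏ i, x i ^ ((α : Fin n →₀ ℕ) i)|

lemma abs_prod_pow_eq {n : ℕ} (x : Fin n → ℝ) (β : Fin n →₀ ℕ) :
    |∏ i, x i ^ β i| = ∏ i, |x i| ^ ((β i : ℕ) : ℝ) := by
  rw [Finset.abs_prod]
  refine Finset.prod_congr rfl fun i _ => ?_
  rw [abs_pow, Real.rpow_natCast]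

theorem stmt6 {n : ℕ} (f : MvPolynomial (Fin n) ℝ) (hf : f.totalDegree ≠ 0) :
    ∃ c₁ > (0 : ℝ), ∃ c₂ > (0 : ℝ), ∀ x : Fin n → ℝ,
      c₁ * P f x ≤ Ptilde f x ∧ Ptilde f x ≤ c₂ * P f x := by
  classical
  have hf0 : f ≠ 0 := by intro h; exact hf (by simp [h])
  have hsupp : f.support.Nonempty := MvPolynomial.support_nonempty.mpr hf0
  set S : Set (Fin n → ℝ) := expR '' (f.support : Set (Fin n →₀ ℕ)) with hSdef
  have hNdef : Newton f = convexHull ℝ S := rfl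
  have hSfin : S.Finite := (f.support.finite_toSet).image _
  -- bound on coordinates of points of the Newton polyhedron
  set Mn : ℕ := f.support.sup (fun β => Finset.univ.sup β) with hMn
  have hcoord : ∀ p ∈ Newton f, ∀ i, p i ≤ (Mn : ℝ) := by
    intro p hp i
    have hconv : Convex ℝ {q : Fin n → ℝ | ∀ i, q i ≤ (Mn : ℝ)} := by
      have he : {q : Fin n → ℝ | ∀ i, q i ≤ (Mn : ℝ)}
          = Set.pi Set.univ (fun _ : Fin n => Set.Iic (Mn : ℝ)) := by
        ext q; simp [Set.mem_pi, Pi.le_def]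
      rw [he]; exact convex_pi fun _ _ => convex_Iic _
    have hsub : S ⊆ {q : Fin n → ℝ | ∀ i, q i ≤ (Mn : ℝ)} := by
      rintro _ ⟨β, hβ, rfl⟩ i
      have hβi : β i ≤ Mn := le_trans (Finset.le_sup (Finset.mem_univ i)) (Finset.le_sup (f := fun β : Fin n →₀ ℕ => Finset.univ.sup ⇑β) hβ)
      show ((β i : ℕ) : ℝ) ≤ (Mn : ℝ)
      exact_mod_cast hβi
    exact (convexHull_min hsub hconv (hNdef ▸ hp)) i
  -- finiteness of the lattice-point index sets
  have hfinA : {α : Fin n →₀ ℕ | expR α ∈ Newton f}.Finite := by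
    have himg : (fun α : Fin n →₀ ℕ => (α : Fin n → ℕ)) '' {α | expR α ∈ Newton f}
        ⊆ Set.pi Set.univ (fun _ : Fin n => Set.Iic Mn) := by
      rintro _ ⟨α, hα, rfl⟩ i _
      have h1 : expR α i ≤ (Mn : ℝ) := hcoord _ hα i
      have h2 : ((α i : ℕ) : ℝ) ≤ (Mn : ℝ) := h1
      exact_mod_cast h2
    exact Set.Finite.of_finite_image
      ((Set.Finite.pi fun _ => Set.finite_Iic Mn).subset himg)
      (DFunLike.coe_injective.injOn)
  -- extreme points
  set E : Set (Fin n → ℝ) := Set.extremePoints ℝ (Newton f) with hEdef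
  have hES : E ⊆ S := by rw [hEdef, hNdef]; exact extremePoints_convexHull_subset
  have hEfin : E.Finite := hSfin.subset hES
  have hNE : convexHull ℝ E = Newton f := by
    have h1 := closure_convexHull_extremePoints
      (hNdef ▸ hSfin.isCompact_convexHull ℝ) (hNdef ▸ convex_convexHull ℝ S)
    rwa [(hEfin.isClosed_convexHull ℝ).closure_eq] at h1
  have hfinV : {α : Fin n →₀ ℕ | expR α ∈ E}.Finite :=
    hfinA.subset fun α (hα : expR α ∈ E) => extremePoints_subset (A := Newton f) hα
  haveI iA : Fintype {α : Fin n →₀ ℕ // expR α ∈ Newton f} := hfinA.fintype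
  haveI iV : Fintype {α : Fin n →₀ ℕ // expR α ∈ Set.extremePoints ℝ (Newton f)} :=
    hfinV.fintype
  have hPsum : ∀ x : Fin n → ℝ, P f x
      = ∑ α : {α : Fin n →₀ ℕ // expR α ∈ Newton f}, |∏ i, x i ^ ((α : Fin n →₀ ℕ) i)| :=
    fun x => tsum_fintype _
  have hPtsum : ∀ x : Fin n → ℝ, Ptilde f x
      = ∑ α : {α : Fin n →₀ ℕ // expR α ∈ Set.extremePoints ℝ (Newton f)},
          |∏ i, x i ^ ((α : Fin n →₀ ℕ) i)| :=
    fun x => tsum_fintype _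
  -- each vertex monomial is bounded by Ptilde
  have hterm : ∀ (x : Fin n → ℝ) (β : Fin n →₀ ℕ), expR β ∈ E →
      |∏ i, x i ^ β i| ≤ Ptilde f x := by
    intro x β hβ
    rw [hPtsum x]
    exact Finset.single_le_sum (f := fun α : {α : Fin n →₀ ℕ //
        expR α ∈ Set.extremePoints ℝ (Newton f)} => |∏ i, x i ^ ((α : Fin n →₀ ℕ) i)|)
      (fun a _ => abs_nonneg _) (Finset.mem_univ ⟨β, hβ⟩)
  -- key estimate: every lattice monomial of the Newton polyhedron is bounded by Ptilde
  have key : ∀ (x : Fin n → ℝ) (α : Fin n →₀ ℕ), expR α ∈ Newton f →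
      |∏ i, x i ^ α i| ≤ Ptilde f x := by
    intro x α hα
    rw [← hNE, convexHull_eq] at hα
    obtain ⟨ι, t, w, z, hw0, hw1, hz, hcm⟩ := hα
    rw [Finset.centerMass_eq_of_sum_1 _ _ hw1] at hcm
    have hzE : ∀ j ∈ t, ∃ β : Fin n →₀ ℕ, expR β ∈ E ∧ z j = expR β := by
      intro j hj
      obtain ⟨β, _, hβe⟩ := hES (hz j hj)
      exact ⟨β, hβe ▸ hz j hj, hβe.symm⟩
    have hznn : ∀ j ∈ t, ∀ i, 0 ≤ z j i := by
      intro j hj i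
      obtain ⟨β, _, hβe⟩ := hzE j hj
      rw [hβe]; exact Nat.cast_nonneg _
    have hcoordeq : ∀ i, ((α i : ℕ) : ℝ) = ∑ j ∈ t, w j * z j i := by
      intro i
      have h1 := congrFun hcm i
      simpa [expR, Finset.sum_apply, Pi.smul_apply, smul_eq_mul] using h1.symm
    set y : Fin n → ℝ := fun i => |x i| with hy'
    have hy : ∀ i, 0 ≤ y i := fun i => abs_nonneg _
    calc |∏ i, x i ^ α i| = ∏ i, y i ^ ((α i : ℕ) : ℝ) := abs_prod_pow_eq x α
      _ = ∏ i, y i ^ (∑ j ∈ t, w j * z j i) :=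
          Finset.prod_congr rfl fun i _ => by rw [hcoordeq i]
      _ = ∏ i, ∏ j ∈ t, y i ^ (w j * z j i) :=
          Finset.prod_congr rfl fun i _ => Real.rpow_sum_of_nonneg (hy i)
            (fun j hj => mul_nonneg (hw0 j hj) (hznn j hj i))
      _ = ∏ j ∈ t, ∏ i, y i ^ (w j * z j i) := Finset.prod_comm
      _ = ∏ j ∈ t, (∏ i, y i ^ (z j i)) ^ (w j) := by
          refine Finset.prod_congr rfl fun j hj => ?_
          rw [← Real.finset_prod_rpow _ _ (fun i _ => Real.rpow_nonneg (hy i) _) _]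
          refine Finset.prod_congr rfl fun i _ => ?_
          rw [mul_comm, Real.rpow_mul (hy i)]
      _ ≤ ∑ j ∈ t, w j * (∏ i, y i ^ (z j i)) :=
          Real.geom_mean_le_arith_mean_weighted t w _ hw0 hw1
            (fun j _ => Finset.prod_nonneg fun i _ => Real.rpow_nonneg (hy i) _)
      _ ≤ ∑ j ∈ t, w j * Ptilde f x := by
          refine Finset.sum_le_sum fun j hj => mul_le_mul_of_nonneg_left ?_ (hw0 j hj)
          obtain ⟨β, hβE, hβe⟩ := hzE j hj
          have he2 : (∏ i, y i ^ (z j i)) = |∏ i, x i ^ β i| := by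
            rw [abs_prod_pow_eq x β]
            exact Finset.prod_congr rfl fun i _ => by rw [hβe]; rfl
          rw [he2]; exact hterm x β hβE
      _ = Ptilde f x := by rw [← Finset.sum_mul, hw1, one_mul]
  -- sizes
  set N : ℕ := Fintype.card {α : Fin n →₀ ℕ // expR α ∈ Newton f} with hNcard
  have hN : 0 < N := by
    obtain ⟨β0, hβ0⟩ := hsupp
    refine Fintype.card_pos_iff.mpr ⟨⟨β0, ?_⟩⟩
    rw [hNdef]
    exact subset_convexHull ℝ S (Set.mem_image_of_mem _ hβ0)
  refine ⟨(N : ℝ)⁻¹, by positivity, 1, one_pos, fun x => ?_⟩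
  constructor
  · have hP : P f x ≤ (N : ℝ) * Ptilde f x := by
      rw [hPsum x]
      calc ∑ α : {α : Fin n →₀ ℕ // expR α ∈ Newton f}, |∏ i, x i ^ ((α : Fin n →₀ ℕ) i)|
          ≤ ∑ _α : {α : Fin n →₀ ℕ // expR α ∈ Newton f}, Ptilde f x :=
            Finset.sum_le_sum fun a _ => key x a.1 a.2
        _ = (N : ℝ) * Ptilde f x := by
            rw [Finset.sum_const, Finset.card_univ, nsmul_eq_mul, hNcard]
    rw [inv_mul_le_iff₀ (by exact_mod_cast hN)]
    exact hP
  · rw [one_mul, hPtsum x, hPsum x]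
    let emb : {α : Fin n →₀ ℕ // expR α ∈ Set.extremePoints ℝ (Newton f)}
        ↪ {α : Fin n →₀ ℕ // expR α ∈ Newton f} :=
      ⟨fun a => ⟨a.1, extremePoints_subset a.2⟩,
        by intro a b h; have h1 := congrArg Subtype.val h; exact Subtype.ext h1⟩
    calc ∑ α : {α : Fin n →₀ ℕ // expR α ∈ Set.extremePoints ℝ (Newton f)},
            |∏ i, x i ^ ((α : Fin n →₀ ℕ) i)|
        = ∑ b ∈ Finset.univ.map emb, |∏ i, x i ^ ((b : Fin n →₀ ℕ) i)| := by
          rw [Finset.sum_map]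
          exact Finset.sum_congr rfl fun a _ => rfl
      _ ≤ ∑ b : {α : Fin n →₀ ℕ // expR α ∈ Newton f}, |∏ i, x i ^ ((b : Fin n →₀ ℕ) i)| :=
          Finset.sum_le_sum_of_subset_of_nonneg (Finset.subset_univ _)
            (fun b _ _ => abs_nonneg _)
end

section
/- Let f : ℝⁿ → ℝ be a nonconstant polynomial with n ≥ 2 and define 𝒫(x) = Σ_{α ∈ Γ(f) ∩ ℤ₊ⁿ} |x^α|. If f_Δ > 0 on (ℝ\{0})ⁿ for every Δ ∈ Γ_∞(f), then there exist constants c₁, c₂, R > 0 such that c₁𝒫(x) ≤ f(x) ≤ c₂𝒫(x) for all x with ‖x‖ > R. -/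
open MvPolynomial Set Asymptotics Filter

noncomputable def mpow {n : ℕ} (x : Fin n → ℝ) (α : Fin n →₀ ℕ) : ℝ := ∏ i, x i ^ α i

lemma aux_expR_inj {n : ℕ} : Function.Injective (expR (n := n)) := by
  intro a b h
  ext i
  have := congrFun h i
  simpa [expR] using this

lemma aux_newton_bound {n : ℕ} (f : MvPolynomial (Fin n) ℝ) :
    ∀ p ∈ Newton f, ∀ i, 0 ≤ p i ∧ p i ≤ (f.totalDegree : ℝ) := by
  intro p hp i
  have hconv : Convex ℝ {p : Fin n → ℝ | ∀ i, 0 ≤ p i ∧ p i ≤ (f.totalDegree : ℝ)} := by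
    intro a ha b hb s t hs ht hst
    intro i
    constructor
    · have := (ha i).1; have := (hb i).1
      simp only [Pi.add_apply, Pi.smul_apply, smul_eq_mul]
      nlinarith
    · have := (ha i).2; have := (hb i).2
      simp only [Pi.add_apply, Pi.smul_apply, smul_eq_mul]
      nlinarith
  have hsub : expR '' (f.support : Set (Fin n →₀ ℕ)) ⊆
      {p : Fin n → ℝ | ∀ i, 0 ≤ p i ∧ p i ≤ (f.totalDegree : ℝ)} := by
    rintro _ ⟨α, hα, rfl⟩ i
    refine ⟨by simp [expR], ?_⟩
    have h1 : α i ≤ f.totalDegree := by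
      calc α i ≤ α.sum fun _ e => e := by
            by_cases hi : i ∈ α.support
            · exact Finset.single_le_sum (f := fun j => α j) (fun j _ => Nat.zero_le _) hi
            · simp [Finsupp.notMem_support_iff.1 hi]
      _ ≤ f.totalDegree := MvPolynomial.le_totalDegree hα
    show (α i : ℝ) ≤ (f.totalDegree : ℝ)
    exact_mod_cast h1
  exact convexHull_min hsub hconv hp i

lemma aux_lattice_finite {n : ℕ} (f : MvPolynomial (Fin n) ℝ) :
    {α : Fin n →₀ ℕ | expR α ∈ Newton f}.Finite := by
  have h1 : {g : Fin n → ℕ | ∀ i, g i ≤ f.totalDegree}.Finite := by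
    have := Set.Finite.pi (t := fun _ : Fin n => Set.Iic f.totalDegree)
      (fun i => Set.finite_Iic _)
    refine this.subset ?_
    intro g hg
    simp only [Set.mem_pi, Set.mem_univ, Set.mem_Iic]
    exact fun i _ => hg i
  have h2 : {α : Fin n →₀ ℕ | expR α ∈ Newton f}.Finite := by
    have hinj : Set.InjOn (fun α : Fin n →₀ ℕ => (α : Fin n → ℕ))
        {α : Fin n →₀ ℕ | expR α ∈ Newton f} := by
      intro a _ b _ h
      exact DFunLike.coe_injective h
    refine Set.Finite.of_finite_image ?_ hinj
    refine h1.subset ?_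
    rintro _ ⟨α, hα, rfl⟩ i
    have h2 := (aux_newton_bound f _ hα i).2
    show α i ≤ f.totalDegree
    have : (α i : ℝ) ≤ (f.totalDegree : ℝ) := h2
    exact_mod_cast this
  exact h2

lemma aux_rpow_add_nonneg {b y z : ℝ} (hb : 0 ≤ b) (hy : 0 ≤ y) (hz : 0 ≤ z) :
    b ^ (y + z) = b ^ y * b ^ z := by
  rcases eq_or_ne (y + z) 0 with h | h
  · have hy0 : y = 0 := by linarith
    have hz0 : z = 0 := by linarith
    simp [hy0, hz0]
  · exact Real.rpow_add' hb h

lemma aux_rpow_sum {ι : Type*} (s : Finset ι) (b : ℝ) (hb : 0 ≤ b) (c : ι → ℝ)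
    (hc : ∀ i ∈ s, 0 ≤ c i) : b ^ (∑ i ∈ s, c i) = ∏ i ∈ s, b ^ (c i) := by
  classical
  induction s using Finset.induction with
  | empty => simp
  | @insert a s ha ih =>
      rw [Finset.sum_insert ha, Finset.prod_insert ha,
        aux_rpow_add_nonneg hb (hc a (Finset.mem_insert_self a s))
          (Finset.sum_nonneg fun i hi => hc i (Finset.mem_insert_of_mem hi)),
        ih (fun i hi => hc i (Finset.mem_insert_of_mem hi))]

lemma aux_mpow_le {n : ℕ} (x : Fin n → ℝ) {S : Finset (Fin n →₀ ℕ)} (hS : S.Nonempty)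
    {β : Fin n →₀ ℕ} (hβ : expR β ∈ convexHull ℝ (expR '' (S : Set (Fin n →₀ ℕ)))) :
    |mpow x β| ≤ S.sup' hS (fun α => |mpow x α|) := by
  classical
  rw [← Finset.coe_image, Finset.convexHull_eq] at hβ
  obtain ⟨w, hw0, hw1, hwc⟩ := hβ
  rw [Finset.centerMass_eq_of_sum_1 _ _ hw1] at hwc
  set W : (Fin n →₀ ℕ) → ℝ := fun α => w (expR α) with hWdef
  have hinj : ∀ a ∈ S, ∀ b ∈ S, expR a = expR b → a = b := fun a _ b _ h => aux_expR_inj h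
  have hW1 : ∑ α ∈ S, W α = 1 := by
    rw [← hw1, Finset.sum_image hinj]
  have hW0 : ∀ α ∈ S, 0 ≤ W α := fun α hα => hw0 _ (Finset.mem_image_of_mem _ hα)
  have hWc : ∀ i, (β i : ℝ) = ∑ α ∈ S, W α * (α i : ℝ) := by
    intro i
    have := congrFun hwc i
    rw [Finset.sum_image hinj] at this
    simp only [Finset.sum_apply, Pi.smul_apply, smul_eq_mul, id] at this
    exact this.symm
  -- |x^β| = ∏_α |x^α| ^ W α
  have key : |mpow x β| = ∏ α ∈ S, |mpow x α| ^ (W α) := by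
    have h1 : |mpow x β| = ∏ i, |x i| ^ ((β i : ℝ)) := by
      rw [mpow, Finset.abs_prod]
      congr 1; ext i; rw [abs_pow, Real.rpow_natCast]
    rw [h1]
    have h2 : ∀ i : Fin n, |x i| ^ ((β i : ℝ)) = ∏ α ∈ S, |x i| ^ (W α * (α i : ℝ)) := by
      intro i
      rw [hWc i, aux_rpow_sum S _ (abs_nonneg _) _
        (fun α hα => mul_nonneg (hW0 α hα) (Nat.cast_nonneg _))]
    simp_rw [h2]
    rw [Finset.prod_comm]
    congr 1; ext α
    have h3 : ∀ i : Fin n, |x i| ^ (W α * (α i : ℝ)) = (|x i| ^ ((α i : ℝ))) ^ (W α) := by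
      intro i
      rw [mul_comm, Real.rpow_mul (abs_nonneg _)]
    simp_rw [h3]
    have h4 : |mpow x α| = ∏ i, |x i| ^ ((α i : ℝ)) := by
      rw [mpow, Finset.abs_prod]
      congr 1; ext i; rw [abs_pow, Real.rpow_natCast]
    rw [h4, Real.finset_prod_rpow _ _ (fun i _ => Real.rpow_nonneg (abs_nonneg _) _)]
  rw [key]
  calc ∏ α ∈ S, |mpow x α| ^ (W α)
      ≤ ∑ α ∈ S, W α * |mpow x α| :=
        Real.geom_mean_le_arith_mean_weighted S W _ hW0 hW1 (fun α _ => abs_nonneg _)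
    _ ≤ ∑ α ∈ S, W α * (S.sup' hS (fun α => |mpow x α|)) := by
        refine Finset.sum_le_sum fun α hα => ?_
        exact mul_le_mul_of_nonneg_left (Finset.le_sup' (fun α => |mpow x α|) hα) (hW0 α hα)
    _ = S.sup' hS (fun α => |mpow x α|) := by
        rw [← Finset.sum_mul, hW1, one_mul]

noncomputable instance auxFT {n : ℕ} (f : MvPolynomial (Fin n) ℝ) :
    Fintype {α : Fin n →₀ ℕ // expR α ∈ Newton f} :=
  (aux_lattice_finite f).fintype

lemma aux_P_eq {n : ℕ} (f : MvPolynomial (Fin n) ℝ) (x : Fin n → ℝ) :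
    P f x = ∑ a : {α : Fin n →₀ ℕ // expR α ∈ Newton f}, |mpow x a.1| := tsum_fintype _

lemma aux_P_nonneg {n : ℕ} (f : MvPolynomial (Fin n) ℝ) (x : Fin n → ℝ) : 0 ≤ P f x :=
  tsum_nonneg (fun _ => abs_nonneg _)

lemma aux_mem_newton {n : ℕ} {f : MvPolynomial (Fin n) ℝ} {α : Fin n →₀ ℕ}
    (hα : α ∈ f.support) : expR α ∈ Newton f :=
  subset_convexHull ℝ _ (Set.mem_image_of_mem _ hα)

lemma aux_le_P {n : ℕ} (f : MvPolynomial (Fin n) ℝ) (x : Fin n → ℝ) {α : Fin n →₀ ℕ}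
    (hα : expR α ∈ Newton f) : |mpow x α| ≤ P f x := by
  rw [aux_P_eq]
  exact Finset.single_le_sum (f := fun a : {α : Fin n →₀ ℕ // expR α ∈ Newton f} => |mpow x a.1|)
    (fun _ _ => abs_nonneg _) (Finset.mem_univ ⟨α, hα⟩)

lemma aux_support_nonempty {n : ℕ} {f : MvPolynomial (Fin n) ℝ} (hf : f.totalDegree ≠ 0) :
    f.support.Nonempty := by
  rcases Finset.eq_empty_or_nonempty f.support with h | h
  · exfalso; apply hf
    have : f = 0 := by rwa [← MvPolynomial.support_eq_empty]
    simp [this]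
  · exact h

/-- `P ≤ card • sup'`. -/
lemma aux_P_le {n : ℕ} (f : MvPolynomial (Fin n) ℝ) (x : Fin n → ℝ)
    (hS : f.support.Nonempty) :
    P f x ≤ (Fintype.card {α : Fin n →₀ ℕ // expR α ∈ Newton f}) *
      f.support.sup' hS (fun α => |mpow x α|) := by
  rw [aux_P_eq]
  calc ∑ a : {α : Fin n →₀ ℕ // expR α ∈ Newton f}, |mpow x a.1|
      ≤ ∑ _a : {α : Fin n →₀ ℕ // expR α ∈ Newton f},
          f.support.sup' hS (fun α => |mpow x α|) := by
        refine Finset.sum_le_sum fun a _ => ?_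
        exact aux_mpow_le x hS a.2
    _ = _ := by rw [Finset.sum_const, nsmul_eq_mul, Finset.card_univ]

/-- Upper bound. -/
lemma aux_upper {n : ℕ} (f : MvPolynomial (Fin n) ℝ) (hf : f.totalDegree ≠ 0) :
    ∃ c₂ > (0:ℝ), ∀ x : Fin n → ℝ, eval x f ≤ c₂ * P f x := by
  have hS := aux_support_nonempty hf
  refine ⟨∑ α ∈ f.support, |f.coeff α|, ?_, ?_⟩
  · obtain ⟨α, hα⟩ := hS
    have h1 : 0 < |f.coeff α| := abs_pos.2 (MvPolynomial.mem_support_iff.1 hα)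
    refine Finset.sum_pos' (fun β _ => abs_nonneg _) ⟨α, hα, h1⟩
  · intro x
    rw [MvPolynomial.eval_eq']
    calc ∑ α ∈ f.support, f.coeff α * ∏ i, x i ^ α i
        ≤ ∑ α ∈ f.support, |f.coeff α| * |mpow x α| := by
          refine Finset.sum_le_sum fun α _ => ?_
          rw [← abs_mul]
          exact le_abs_self _
      _ ≤ ∑ α ∈ f.support, |f.coeff α| * P f x := by
          refine Finset.sum_le_sum fun α hα => ?_
          exact mul_le_mul_of_nonneg_left (aux_le_P f x (aux_mem_newton hα)) (abs_nonneg _)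
      _ = (∑ α ∈ f.support, |f.coeff α|) * P f x := by rw [Finset.sum_mul]

/-- A function into a finite type is a.e. constant along an ultrafilter. -/
lemma aux_ult_const {γ : Type*} [Finite γ] (g : ℕ → γ) (U : Ultrafilter ℕ) :
    ∃ c, ∀ᶠ k in (U : Filter ℕ), g k = c := by
  have h : (⋃ c ∈ (Set.univ : Set γ), g ⁻¹' {c}) ∈ U := by
    have : (⋃ c ∈ (Set.univ : Set γ), g ⁻¹' {c}) = Set.univ := by
      ext k; simp
    rw [this]; exact Filter.univ_mem
  rcases (Ultrafilter.finite_biUnion_mem_iff Set.finite_univ).1 h with ⟨c, _, hc⟩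
  exact ⟨c, hc⟩

/-- A bounded real sequence has a limit along an ultrafilter. -/
lemma aux_ult_lim {u : ℕ → ℝ} {U : Ultrafilter ℕ} {a b : ℝ}
    (h : ∀ᶠ k in (U : Filter ℕ), u k ∈ Set.Icc a b) :
    ∃ T ∈ Set.Icc a b, Tendsto u (U : Filter ℕ) (nhds T) := by
  have hle : (U.map u : Filter ℝ) ≤ Filter.principal (Set.Icc a b) := by
    rw [Filter.le_principal_iff]
    exact h
  obtain ⟨T, hT, hle'⟩ := (isCompact_Icc (a := a) (b := b)).ultrafilter_le_nhds (U.map u) hle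
  exact ⟨T, hT, hle'⟩

/-- Separation of `0` from a compact convex set in Euclidean space. -/
lemma aux_sep {m : ℕ} {K : Set (EuclideanSpace ℝ (Fin m))} (hK : IsCompact K)
    (hc : Convex ℝ K) (h0 : 0 ∉ K) :
    ∃ v : EuclideanSpace ℝ (Fin m), ∀ z ∈ K, 0 < inner (𝕜 := ℝ) v z := by
  obtain ⟨ℓ, u, hu1, hu2⟩ := geometric_hahn_banach_point_closed hc hK.isClosed h0
  set v := (InnerProductSpace.toDual ℝ (EuclideanSpace ℝ (Fin m))).symm ℓ with hv
  refine ⟨v, fun z hz => ?_⟩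
  have h3 : inner (𝕜 := ℝ) v z = ℓ z := by
    rw [hv]; exact InnerProductSpace.toDual_symm_apply
  rw [h3]
  have h4 : ℓ 0 = 0 := map_zero ℓ
  have := hu2 z hz
  linarith [hu1]

/-- Extension of a linear functional prescribed on finitely many vectors,
given compatibility with linear relations. -/
lemma aux_ext {m : ℕ} {ι : Type*} [Fintype ι] (uvec : ι → EuclideanSpace ℝ (Fin m)) (b : ι → ℝ)
    (hcomp : ∀ c : ι → ℝ, (∑ j, c j • uvec j) = 0 → (∑ j, c j * b j) = 0) :
    ∃ ψ : EuclideanSpace ℝ (Fin m) →ₗ[ℝ] ℝ, ∀ j, ψ (uvec j) = b j := by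
  classical
  set A : (ι → ℝ) →ₗ[ℝ] EuclideanSpace ℝ (Fin m) := Fintype.linearCombination ℝ uvec with hA
  set B : (ι → ℝ) →ₗ[ℝ] ℝ := Fintype.linearCombination ℝ b with hB
  have hker : LinearMap.ker A ≤ LinearMap.ker B := by
    intro c hc
    rw [LinearMap.mem_ker] at hc ⊢
    have h1 : (∑ j, c j • uvec j) = 0 := by
      rw [hA] at hc; simpa [Fintype.linearCombination_apply] using hc
    have := hcomp c h1
    rw [hB]; simpa [Fintype.linearCombination_apply, smul_eq_mul] using this
  set W := LinearMap.range A with hW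
  set ψ₀ : W →ₗ[ℝ] ℝ :=
    (LinearMap.ker A).liftQ B hker ∘ₗ (A.quotKerEquivRange.symm : W →ₗ[ℝ] _) with hψ₀
  set ψ : EuclideanSpace ℝ (Fin m) →ₗ[ℝ] ℝ :=
    ψ₀ ∘ₗ (W.orthogonalProjectionOnto : EuclideanSpace ℝ (Fin m) →L[ℝ] W).toLinearMap with hψ
  refine ⟨ψ, fun j => ?_⟩
  have hAsingle : A (Pi.single j 1) = uvec j := by
    simp [hA, Fintype.linearCombination_apply, Pi.single_apply, ite_smul, Finset.sum_ite_eq']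
  have hmem : uvec j ∈ W := ⟨Pi.single j 1, hAsingle⟩
  have hproj : (W.orthogonalProjectionOnto (uvec j) : W) = ⟨uvec j, hmem⟩ := by
    apply Subtype.ext
    exact Submodule.starProjection_eq_self_iff.2 hmem
  have hquot : A.quotKerEquivRange ((LinearMap.ker A).mkQ (Pi.single j 1)) = ⟨uvec j, hmem⟩ := by
    apply Subtype.ext
    rw [Submodule.mkQ_apply, LinearMap.quotKerEquivRange_apply_mk]
    exact hAsingle
  have hsymm : (A.quotKerEquivRange.symm ⟨uvec j, hmem⟩) = (LinearMap.ker A).mkQ (Pi.single j 1) := by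
    rw [← hquot, LinearEquiv.symm_apply_apply]
  calc ψ (uvec j) = ψ₀ ⟨uvec j, hmem⟩ := by rw [hψ]; simp [hproj]
    _ = B (Pi.single j 1) := by
        rw [hψ₀]; simp only [LinearMap.comp_apply]
        rw [LinearEquiv.coe_coe, hsymm, Submodule.mkQ_apply, Submodule.liftQ_apply]
    _ = b j := by
        simp [hB, Fintype.linearCombination_apply, Pi.single_apply, ite_smul,
          Finset.sum_ite_eq']

set_option maxHeartbeats 2000000 in
lemma aux_lower {n : ℕ} (hn : 2 ≤ n) (f : MvPolynomial (Fin n) ℝ) (hf : f.totalDegree ≠ 0)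
    (hpos : ∀ Δ ∈ NewtonBoundary f, ∀ x : Fin n → ℝ, (∀ i, x i ≠ 0) →
      0 < eval x (trunc f Δ)) :
    ∃ c₁ > (0:ℝ), ∃ R > (0:ℝ), ∀ x : Fin n → ℝ, R < ‖x‖ → c₁ * P f x ≤ eval x f := by
  classical
  by_contra hcon
  push_neg at hcon
  have hS := aux_support_nonempty hf
  -- the sequence
  have hseq : ∀ k : ℕ, ∃ x : Fin n → ℝ, ((k:ℝ)+1) < ‖x‖ ∧
      eval x f < (1/((k:ℝ)+1)) * P f x := by
    intro k
    obtain ⟨xx, h1, h2⟩ := hcon (1/((k:ℝ)+1)) (by positivity) ((k:ℝ)+1) (by positivity)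
    exact ⟨xx, h1, h2⟩
  choose x hxn hxf using hseq
  set m : ℕ := Fintype.card {α : Fin n →₀ ℕ // expR α ∈ Newton f} with hmdef
  have hm : 0 < m := by
    obtain ⟨α, hα⟩ := hS
    exact Fintype.card_pos_iff.2 ⟨⟨α, aux_mem_newton hα⟩⟩
  have hPpos : ∀ k, 0 < P f (x k) := by
    intro k
    rcases (aux_P_nonneg f (x k)).lt_or_eq with h | h
    · exact h
    · exfalso
      have hPz : P f (x k) = 0 := h.symm
      have hmz : ∀ α ∈ f.support, mpow (x k) α = 0 := fun α hα =>
        abs_eq_zero.1 (le_antisymm (hPz ▸ aux_le_P f (x k) (aux_mem_newton hα)) (abs_nonneg _))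
      have hev : eval (x k) f = 0 := by
        rw [MvPolynomial.eval_eq']
        exact Finset.sum_eq_zero fun α hα => by
          rw [show (∏ i, x k i ^ α i) = mpow (x k) α from rfl, hmz α hα, mul_zero]
      have := hxf k
      rw [hev, hPz, mul_zero] at this
      exact lt_irrefl 0 this
  set maxS : ℕ → ℝ := fun k => f.support.sup' hS (fun α => |mpow (x k) α|) with hmaxSdef
  have hPle : ∀ k, P f (x k) ≤ m * maxS k := fun k => aux_P_le f (x k) hS
  have hmax : ∀ k, 0 < maxS k := by
    intro k
    by_contra h
    push_neg at h
    have : P f (x k) ≤ 0 := le_trans (hPle k)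
      (mul_nonpos_of_nonneg_of_nonpos (by positivity) h)
    exact absurd (hPpos k) (not_lt.2 this)
  -- ultrafilter
  obtain ⟨U, hU⟩ := Filter.exists_ultrafilter_le (atTop : Filter ℕ)
  have hev_top : ∀ C : ℝ, ∀ᶠ k in (U : Filter ℕ), C < ‖x k‖ := by
    intro C
    have h1 : ∀ᶠ (k : ℕ) in atTop, C < (k:ℝ)+1 := by
      rw [Filter.eventually_atTop]
      refine ⟨⌈C⌉₊, fun k hk => ?_⟩
      calc C ≤ (⌈C⌉₊ : ℝ) := Nat.le_ceil C
        _ ≤ (k : ℝ) := by exact_mod_cast hk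
        _ < (k : ℝ) + 1 := by linarith
    exact (h1.filter_mono hU).mono fun k hk => lt_trans hk (hxn k)
  -- argmax
  have hAex : ∀ k, ∃ α ∈ f.support, maxS k = |mpow (x k) α| := fun k =>
    Finset.exists_mem_eq_sup' hS _
  choose A hAS hAeq using hAex
  obtain ⟨α0, hα0⟩ := aux_ult_const (fun k => (⟨A k, hAS k⟩ : {a // a ∈ f.support})) U
  set αs : Fin n →₀ ℕ := (α0 : Fin n →₀ ℕ) with hαsdef
  have hαsS : αs ∈ f.support := α0.2
  have hE1 : ∀ᶠ k in (U : Filter ℕ), A k = αs := hα0.mono fun k hk => by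
    have := congrArg Subtype.val hk
    simpa using this
  have hmaxeq : ∀ᶠ k in (U : Filter ℕ), maxS k = |mpow (x k) αs| :=
    hE1.mono fun k hk => by rw [hAeq k, hk]
  have hαsne : ∀ᶠ k in (U : Filter ℕ), mpow (x k) αs ≠ 0 :=
    hmaxeq.mono fun k hk => by
      intro h0
      rw [h0, abs_zero] at hk
      exact absurd (hmax k) (by rw [hk]; exact lt_irrefl 0)
  -- the coordinate achieving the sup norm
  have hIex : ∀ k, ∃ i : Fin n, ‖x k‖ = |x k i| := by
    intro k
    haveI : Nonempty (Fin n) := ⟨⟨0, by omega⟩⟩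
    obtain ⟨i, _, hi⟩ := Finset.exists_mem_eq_sup (Finset.univ : Finset (Fin n))
      Finset.univ_nonempty (fun i => ‖x k i‖₊)
    refine ⟨i, ?_⟩
    rw [Pi.norm_def, hi]
    simp [Real.norm_eq_abs]
  choose I hI using hIex
  obtain ⟨istar, hE2⟩ := aux_ult_const I U
  have hIi : ∀ᶠ k in (U : Filter ℕ), ‖x k‖ = |x k istar| :=
    hE2.mono fun k hk => by rw [← hk]; exact hI k
  have htop : Tendsto (fun k => |x k istar|) (U : Filter ℕ) atTop := by
    rw [Filter.tendsto_atTop]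
    intro C
    exact ((hev_top C).and hIi).mono fun k ⟨h1, h2⟩ => (h2 ▸ h1).le
  -- zero coordinates
  set Z : Set (Fin n) := {i | {k | x k i = 0} ∈ U} with hZdef
  have hZ0 : ∀ i ∈ Z, ∀ᶠ k in (U : Filter ℕ), x k i = 0 := fun i hi => hi
  have hZc : ∀ i ∉ Z, ∀ᶠ k in (U : Filter ℕ), x k i ≠ 0 := by
    intro i hi
    have : {k | x k i = 0}ᶜ ∈ U := (Ultrafilter.compl_mem_iff_notMem).2 hi
    exact this
  have histar : istar ∉ Z := by
    intro hmem
    have h1 : ∀ᶠ k in (U : Filter ℕ), (1:ℝ) ≤ |x k istar| := htop.eventually_ge_atTop 1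
    obtain ⟨k, hk1, hk2⟩ := (h1.and (hZ0 istar hmem)).exists
    rw [hk2] at hk1
    norm_num at hk1
  have hgood : ∀ᶠ k in (U : Filter ℕ), ∀ i, i ∉ Z → x k i ≠ 0 := by
    rw [Filter.eventually_all]
    intro i
    by_cases hi : i ∈ Z
    · exact Filter.Eventually.of_forall fun k h => absurd hi h
    · exact (hZc i hi).mono fun k hk _ => hk
  -- normalized monomials and their limits
  set t : (Fin n →₀ ℕ) → ℕ → ℝ := fun α k => mpow (x k) α / mpow (x k) αs with htdef
  have hbd : ∀ α ∈ f.support, ∀ᶠ k in (U : Filter ℕ), t α k ∈ Set.Icc (-1:ℝ) 1 := by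
    intro α hα
    filter_upwards [hmaxeq, hαsne] with k h1 h2
    have h3 : |mpow (x k) α| ≤ |mpow (x k) αs| := by
      rw [← h1]
      exact Finset.le_sup' (fun β => |mpow (x k) β|) hα
    have h4 : |t α k| ≤ 1 := by
      show |mpow (x k) α / mpow (x k) αs| ≤ 1
      rw [abs_div, div_le_one (abs_pos.2 h2)]
      exact h3
    exact abs_le.1 h4
  have hTex : ∀ α ∈ f.support, ∃ T ∈ Set.Icc (-1:ℝ) 1,
      Tendsto (t α) (U : Filter ℕ) (nhds T) := fun α hα => aux_ult_lim (hbd α hα)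
  set T : (Fin n →₀ ℕ) → ℝ := fun α =>
    if h : α ∈ f.support then (hTex α h).choose else 0 with hTdef
  have hTt : ∀ α ∈ f.support, Tendsto (t α) (U : Filter ℕ) (nhds (T α)) := by
    intro α hα
    rw [hTdef]
    simp only [dif_pos hα]
    exact (hTex α hα).choose_spec.2
  haveI : (U : Filter ℕ).NeBot := U.neBot
  have hTas : T αs = 1 := by
    have h2 : ∀ᶠ k in (U : Filter ℕ), t αs k = 1 := hαsne.mono fun k hk => by
      show mpow (x k) αs / mpow (x k) αs = 1
      exact div_self hk
    have h3 : Tendsto (t αs) (U : Filter ℕ) (nhds 1) :=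
      Filter.Tendsto.congr' (h2.mono fun k hk => hk.symm) tendsto_const_nhds
    exact tendsto_nhds_unique (hTt αs hαsS) h3
  -- monomials supported off Z
  set S' : Finset (Fin n →₀ ℕ) := f.support.filter (fun α => ∀ i ∈ Z, α i = 0) with hS'def
  have hS'S : S' ⊆ f.support := Finset.filter_subset _ _
  have hTZ : ∀ α ∈ f.support, α ∉ S' → T α = 0 := by
    intro α hα hns
    rw [hS'def, Finset.mem_filter] at hns
    push_neg at hns
    obtain ⟨i, hiZ, hine⟩ := hns hα
    have h1 : ∀ᶠ k in (U : Filter ℕ), t α k = 0 := by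
      filter_upwards [hZ0 i hiZ] with k hk
      have : mpow (x k) α = 0 := by
        rw [mpow]
        exact Finset.prod_eq_zero (Finset.mem_univ i) (by rw [hk]; exact zero_pow hine)
      show mpow (x k) α / mpow (x k) αs = 0
      rw [this, zero_div]
    have h2 : Tendsto (t α) (U : Filter ℕ) (nhds 0) :=
      Filter.Tendsto.congr' (h1.mono fun k hk => hk.symm) tendsto_const_nhds
    exact tendsto_nhds_unique (hTt α hα) h2
  set M : Finset (Fin n →₀ ℕ) := S'.filter (fun α => T α ≠ 0) with hMdef
  have hMS' : M ⊆ S' := Finset.filter_subset _ _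
  have hαsS' : αs ∈ S' := by
    by_contra h
    rw [hTZ αs hαsS h] at hTas
    norm_num at hTas
  have hαsM : αs ∈ M := by
    rw [hMdef, Finset.mem_filter]
    exact ⟨hαsS', by rw [hTas]; norm_num⟩
  have hmono_ne : ∀ α ∈ S', ∀ᶠ k in (U : Filter ℕ), mpow (x k) α ≠ 0 := by
    intro α hα
    rw [hS'def, Finset.mem_filter] at hα
    filter_upwards [hgood] with k hk
    rw [mpow, Finset.prod_ne_zero_iff]
    intro i _
    by_cases hi : i ∈ Z
    · rw [hα.2 i hi, pow_zero]; norm_num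
    · exact pow_ne_zero _ (hk i hi)
  have htne : ∀ α ∈ S', ∀ᶠ k in (U : Filter ℕ), t α k ≠ 0 := by
    intro α hα
    filter_upwards [hmono_ne α hα, hαsne] with k h1 h2
    show mpow (x k) α / mpow (x k) αs ≠ 0
    exact div_ne_zero h1 h2
  -- logs
  have hlogm : ∀ α ∈ S', ∀ᶠ k in (U : Filter ℕ),
      Real.log (mpow (x k) α) = ∑ i, (α i : ℝ) * Real.log (x k i) := by
    intro α hα
    rw [hS'def, Finset.mem_filter] at hα
    filter_upwards [hgood] with k hk
    rw [mpow, Real.log_prod]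
    · refine Finset.sum_congr rfl fun i _ => ?_
      rw [Real.log_pow]
    · intro i _
      by_cases hi : i ∈ Z
      · rw [hα.2 i hi, pow_zero]; norm_num
      · exact pow_ne_zero _ (hk i hi)
  have hlog : ∀ α ∈ S', ∀ᶠ k in (U : Filter ℕ),
      Real.log (t α k) = ∑ i, ((α i : ℝ) - (αs i : ℝ)) * Real.log (x k i) := by
    intro α hα
    filter_upwards [hlogm α hα, hlogm αs hαsS', hmono_ne α hα, hαsne] with k h1 h2 h3 h4
    show Real.log (mpow (x k) α / mpow (x k) αs) = _
    rw [Real.log_div h3 h4, h1, h2, ← Finset.sum_sub_distrib]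
    refine Finset.sum_congr rfl fun i _ => ?_
    ring
  -- Euclidean space setup
  set toE : (Fin n → ℝ) ≃ₗ[ℝ] EuclideanSpace ℝ (Fin n) :=
    (WithLp.linearEquiv 2 ℝ (Fin n → ℝ)).symm with htoEdef
  have happ : ∀ (p : Fin n → ℝ) (i : Fin n), (toE p) i = p i := fun p i => rfl
  have hinner : ∀ (v : EuclideanSpace ℝ (Fin n)) (p : Fin n → ℝ),
      inner (𝕜 := ℝ) v (toE p) = ∑ i, v i * p i := by
    intro v p
    rw [PiLp.inner_apply]
    refine Finset.sum_congr rfl fun i _ => ?_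
    rw [RCLike.inner_apply, conj_trivial, happ, mul_comm]
  set dd : (Fin n →₀ ℕ) → EuclideanSpace ℝ (Fin n) :=
    fun α => toE (expR α - expR αs) with hdddef
  have hddinj : ∀ a ∈ M, ∀ b ∈ M, dd a = dd b → a = b := by
    intro a _ b _ hab
    have h1 : expR a - expR αs = expR b - expR αs := toE.injective hab
    have h2 : expR a = expR b := by
      have := congrArg (fun v => v + expR αs) h1
      simpa using this
    exact aux_expR_inj h2
  set pr : EuclideanSpace ℝ (Fin n) → ℕ → ℝ :=
    fun v k => ∑ i, v i * Real.log (x k i) with hprdef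
  have hprlin : ∀ {ι : Type} (s : Finset ι) (c : ι → ℝ) (g : ι → EuclideanSpace ℝ (Fin n))
      (k : ℕ), pr (∑ j ∈ s, c j • g j) k = ∑ j ∈ s, c j * pr (g j) k := by
    intro ι s c g k
    have h1 : ∀ (q : EuclideanSpace ℝ (Fin n)) (i : Fin n), q i = (toE.symm q) i :=
      fun q i => rfl
    show (∑ i, (∑ j ∈ s, c j • g j) i * Real.log (x k i)) = _
    have h2 : ∀ i, (∑ j ∈ s, c j • g j) i = ∑ j ∈ s, c j * (g j) i := by
      intro i
      show (toE.symm (∑ j ∈ s, c j • g j)) i = ∑ j ∈ s, c j * (g j) i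
      rw [map_sum, Finset.sum_apply]
      refine Finset.sum_congr rfl fun j _ => ?_
      show (toE.symm (c j • g j)) i = _
      rw [map_smul]
      rfl
    simp_rw [h2, Finset.sum_mul]
    rw [Finset.sum_comm]
    refine Finset.sum_congr rfl fun j _ => ?_
    show ∑ i, c j * (g j) i * Real.log (x k i) = c j * ∑ i, (g j) i * Real.log (x k i)
    rw [Finset.mul_sum]
    refine Finset.sum_congr rfl fun i _ => ?_
    ring
  -- the test vectors
  set gvec : (Fin n →₀ ℕ) → EuclideanSpace ℝ (Fin n) :=
    fun α => toE (expR αs - expR α) with hgvecdef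
  set gstar : EuclideanSpace ℝ (Fin n) := toE (Pi.single istar 1) with hgstardef
  set G : Finset (EuclideanSpace ℝ (Fin n)) := (S' \ M).image gvec ∪ {gstar} with hGdef
  set V₀ : Submodule ℝ (EuclideanSpace ℝ (Fin n)) :=
    Submodule.span ℝ (↑(M.image dd) : Set (EuclideanSpace ℝ (Fin n))) with hV₀def
  -- divergence of pr on G
  have hprg : ∀ g ∈ G, Tendsto (pr g) (U : Filter ℕ) atTop := by
    intro g hg
    rw [hGdef, Finset.mem_union] at hg
    rcases hg with hg | hg
    · obtain ⟨α, hαmem, rfl⟩ := Finset.mem_image.1 hg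
      rw [Finset.mem_sdiff] at hαmem
      obtain ⟨hαS', hαM⟩ := hαmem
      have hT0 : T α = 0 := by
        by_contra h
        exact hαM (Finset.mem_filter.2 ⟨hαS', h⟩)
      have hlb : Tendsto (fun k => Real.log (t α k)) (U : Filter ℕ) atBot := by
        rw [Filter.tendsto_atBot]
        intro C
        have h1 : Tendsto (fun k => |t α k|) (U : Filter ℕ) (nhds 0) := by
          have h2 := (hTt α (hS'S hαS')).abs
          rw [hT0, abs_zero] at h2
          exact h2
        have h2 : ∀ᶠ k in (U : Filter ℕ), |t α k| < Real.exp C :=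
          h1.eventually_lt_const (Real.exp_pos C)
        filter_upwards [h2, htne α hαS'] with k hk1 hk2
        rw [← Real.log_abs]
        calc Real.log |t α k| ≤ Real.log (Real.exp C) :=
              (Real.log_le_log_iff (abs_pos.2 hk2) (Real.exp_pos C)).2 hk1.le
          _ = C := Real.log_exp C
      have hev : ∀ᶠ k in (U : Filter ℕ), - Real.log (t α k) = pr (gvec α) k := by
        filter_upwards [hlog α hαS'] with k hk
        show _ = (∑ i, (gvec α) i * Real.log (x k i))
        rw [hk, ← Finset.sum_neg_distrib]
        refine Finset.sum_congr rfl fun i _ => ?_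
        have h3 : (gvec α) i = (αs i : ℝ) - (α i : ℝ) := rfl
        rw [h3]
        ring
      have h4 : Tendsto (fun k => - Real.log (t α k)) (U : Filter ℕ) atTop :=
        tendsto_neg_atTop_iff.mpr hlb
      exact h4.congr' hev
    · rw [Finset.mem_singleton] at hg
      subst hg
      have h5 : ∀ k, Real.log |x k istar| = pr gstar k := by
        intro k
        rw [Real.log_abs]
        show _ = (∑ i, (gstar) i * Real.log (x k i))
        have h6 : ∀ i, (gstar) i = if i = istar then (1:ℝ) else 0 := by
          intro i
          rw [hgstardef, happ]
          exact Pi.single_apply istar (1:ℝ) i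
        simp only [h6, ite_mul, one_mul, zero_mul]
        rw [Finset.sum_ite_eq' Finset.univ istar (fun i => Real.log (x k i))]
        simp
      exact (Real.tendsto_log_atTop.comp htop).congr h5
  -- orthogonal projection onto V₀ᗮ and the compact convex set K
  set πc : EuclideanSpace ℝ (Fin n) →L[ℝ] EuclideanSpace ℝ (Fin n) :=
    (V₀ᗮ).subtypeL.comp ((V₀ᗮ).orthogonalProjectionOnto) with hπcdef
  have hπeq : ∀ u, πc u = ↑((V₀ᗮ).orthogonalProjectionOnto u) := fun u => rfl
  set K : Set (EuclideanSpace ℝ (Fin n)) := πc '' (convexHull ℝ (G : Set _)) with hKdef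
  have hGne : gstar ∈ (G : Set (EuclideanSpace ℝ (Fin n))) := by
    rw [hGdef]; simp
  have hKcomp : IsCompact K := (G.finite_toSet.isCompact_convexHull ℝ).image πc.continuous
  have hKconv : Convex ℝ K := by
    have h1 : Convex ℝ (convexHull ℝ (G : Set (EuclideanSpace ℝ (Fin n)))) :=
      convex_convexHull ℝ _
    exact h1.linear_image πc.toLinearMap
  have h0K : (0 : EuclideanSpace ℝ (Fin n)) ∉ K := by
    rintro ⟨p, hp, hp0⟩
    -- p ∈ V₀
    have hpV : p ∈ V₀ := by
      have h1 : p - πc p ∈ (V₀ᗮ)ᗮ := Submodule.sub_starProjection_mem_orthogonal (K := V₀ᗮ) p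
      rw [hp0, sub_zero] at h1
      rwa [Submodule.orthogonal_orthogonal] at h1
    -- convex combination representation
    rw [Finset.convexHull_eq] at hp
    obtain ⟨w, hw0, hw1, hwc⟩ := hp
    rw [Finset.centerMass_eq_of_sum_1 _ _ hw1] at hwc
    simp only [id] at hwc
    -- span representation
    rw [hV₀def, Submodule.mem_span_finset] at hpV
    obtain ⟨c, -, hc⟩ := hpV
    have hcM : ∑ α ∈ M, c (dd α) • dd α = p := by
      rw [Finset.sum_image hddinj] at hc
      exact hc
    -- two incompatible limits for pr p
    have ht1 : Tendsto (pr p) (U : Filter ℕ) atTop := by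
      rw [Filter.tendsto_atTop]
      intro C
      have hall : ∀ᶠ k in (U : Filter ℕ), ∀ g ∈ G, C ≤ pr g k := by
        rw [Filter.eventually_all_finset]
        intro g hg
        exact (hprg g hg).eventually_ge_atTop C
      filter_upwards [hall] with k hk
      have h2 : pr p k = ∑ g ∈ G, w g * pr g k := by
        rw [← hwc]
        exact hprlin G w id k
      rw [h2]
      calc C = ∑ g ∈ G, w g * C := by rw [← Finset.sum_mul, hw1, one_mul]
        _ ≤ ∑ g ∈ G, w g * pr g k :=
          Finset.sum_le_sum fun g hg => mul_le_mul_of_nonneg_left (hk g hg) (hw0 g hg)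
    have ht2 : Tendsto (pr p) (U : Filter ℕ)
        (nhds (∑ α ∈ M, c (dd α) * Real.log (T α))) := by
      have h2 : ∀ k, pr p k = ∑ α ∈ M, c (dd α) * pr (dd α) k := by
        intro k
        rw [← hcM]
        exact hprlin M (fun α => c (dd α)) dd k
      have h3 : ∀ α ∈ M, Tendsto (pr (dd α)) (U : Filter ℕ)
          (nhds (Real.log (T α))) := by
        intro α hαM
        have hTne : T α ≠ 0 := (Finset.mem_filter.1 hαM).2
        have h4 : Tendsto (fun k => Real.log (t α k)) (U : Filter ℕ)
            (nhds (Real.log (T α))) :=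
          (Real.continuousAt_log hTne).tendsto.comp (hTt α (hS'S (hMS' hαM)))
        refine h4.congr' ?_
        filter_upwards [hlog α (hMS' hαM)] with k hk
        show Real.log (t α k) = pr (dd α) k
        rw [hk]
        rfl
      have h5 : Tendsto (fun k => ∑ α ∈ M, c (dd α) * pr (dd α) k) (U : Filter ℕ)
          (nhds (∑ α ∈ M, c (dd α) * Real.log (T α))) :=
        tendsto_finset_sum M fun α hα => ((h3 α hα).const_mul _)
      exact h5.congr (fun k => (h2 k).symm)
    exact (not_tendsto_atTop_of_tendsto_nhds ht2) ht1
  -- separation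
  obtain ⟨v, hv⟩ := aux_sep hKcomp hKconv h0K
  set vq : EuclideanSpace ℝ (Fin n) := πc v with hvqdef
  have hsadj : ∀ g : EuclideanSpace ℝ (Fin n),
      inner (𝕜 := ℝ) vq g = inner (𝕜 := ℝ) v (πc g) := by
    intro g
    rw [hvqdef, hπeq, hπeq]
    exact Submodule.inner_starProjection_left_eq_right (K := V₀ᗮ) v g
  have hvG : ∀ g ∈ G, (0:ℝ) < inner (𝕜 := ℝ) vq g := by
    intro g hg
    rw [hsadj]
    exact hv (πc g) ⟨g, subset_convexHull ℝ _ hg, rfl⟩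
  have hvV₀ : ∀ u ∈ V₀, inner (𝕜 := ℝ) vq u = 0 := by
    intro u hu
    rw [hsadj]
    have h1 : (V₀ᗮ).orthogonalProjectionOnto u = 0 := by
      apply Submodule.orthogonalProjectionOnto_apply_of_mem_orthogonal
      rw [Submodule.orthogonal_orthogonal]
      exact hu
    rw [hπeq, h1]
    simp
  -- limits of pr on dd α for α ∈ M
  have hprM : ∀ α ∈ M, Tendsto (pr (dd α)) (U : Filter ℕ) (nhds (Real.log (T α))) := by
    intro α hαM
    have hTne : T α ≠ 0 := (Finset.mem_filter.1 hαM).2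
    have h4 : Tendsto (fun k => Real.log (t α k)) (U : Filter ℕ)
        (nhds (Real.log (T α))) :=
      (Real.continuousAt_log hTne).tendsto.comp (hTt α (hS'S (hMS' hαM)))
    refine h4.congr' ?_
    filter_upwards [hlog α (hMS' hαM)] with k hk
    show Real.log (t α k) = pr (dd α) k
    rw [hk]
    rfl
  -- the three sign facts about vq
  have hvqM : ∀ α ∈ M, (∑ i, vq i * ((α i : ℝ) - (αs i : ℝ))) = 0 := by
    intro α hα
    have h1 : dd α ∈ V₀ := by
      rw [hV₀def]
      exact Submodule.subset_span (by
        rw [Finset.coe_image]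
        exact Set.mem_image_of_mem dd hα)
    have h2 := hvV₀ (dd α) h1
    rw [hdddef] at h2
    rw [hinner] at h2
    rw [← h2]
    rfl
  have hvqlt : ∀ α ∈ S', α ∉ M → (0:ℝ) < ∑ i, vq i * ((αs i : ℝ) - (α i : ℝ)) := by
    intro α hα hαM
    have h1 : gvec α ∈ G := by
      rw [hGdef, Finset.mem_union]
      exact Or.inl (Finset.mem_image_of_mem _ (Finset.mem_sdiff.2 ⟨hα, hαM⟩))
    have h2 := hvG (gvec α) h1
    rw [hgvecdef] at h2
    rw [hinner] at h2
    exact h2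
  have hvqstar : (0:ℝ) < vq istar := by
    have h2 := hvG gstar hGne
    rw [hgstardef, hinner] at h2
    have h3 : (∑ i, vq i * (Pi.single istar (1:ℝ) : Fin n → ℝ) i) = vq istar := by
      have h6 : ∀ i, (Pi.single istar (1:ℝ) : Fin n → ℝ) i = if i = istar then (1:ℝ) else 0 :=
        fun i => Pi.single_apply istar (1:ℝ) i
      simp only [h6, mul_ite, mul_one, mul_zero]
      rw [Finset.sum_ite_eq' Finset.univ istar (fun i => vq i)]
      simp
    rwa [h3] at h2
  -- the vector qf and the face
  set C0 : ℝ := ∑ α ∈ f.support, (∑ i, |vq i| * (α i : ℝ)) with hC0def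
  have hC0nn : ∀ α ∈ f.support, (∑ i, |vq i| * (α i : ℝ)) ≤ C0 := by
    intro α hα
    refine Finset.single_le_sum (f := fun α => (∑ i, |vq i| * ((α : Fin n →₀ ℕ) i : ℝ)))
      (fun β _ => Finset.sum_nonneg fun i _ =>
        mul_nonneg (abs_nonneg _) (Nat.cast_nonneg _)) hα
  have habs : ∀ α ∈ f.support, |∑ i, vq i * (α i : ℝ)| ≤ C0 := by
    intro α hα
    calc |∑ i, vq i * (α i : ℝ)| ≤ ∑ i, |vq i * (α i : ℝ)| :=
          Finset.abs_sum_le_sum_abs _ _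
      _ = ∑ i, |vq i| * (α i : ℝ) := by
          refine Finset.sum_congr rfl fun i _ => ?_
          rw [abs_mul, abs_of_nonneg (Nat.cast_nonneg _ : (0:ℝ) ≤ (α i : ℝ))]
      _ ≤ C0 := hC0nn α hα
  set N : ℝ := 2 * C0 + 1 with hNdef
  have hC0pos : 0 ≤ C0 := le_trans (abs_nonneg _) (habs αs hαsS)
  set qf : Fin n → ℝ := fun i => if i ∈ Z then N else -(vq i) with hqfdef
  have hqfS' : ∀ α ∈ S', (∑ i, qf i * (α i : ℝ)) = -(∑ i, vq i * (α i : ℝ)) := by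
    intro α hα
    have hz : ∀ i ∈ Z, α i = 0 := (Finset.mem_filter.1 hα).2
    rw [← Finset.sum_neg_distrib]
    refine Finset.sum_congr rfl fun i _ => ?_
    by_cases hi : i ∈ Z
    · rw [hz i hi]
      simp
    · have : qf i = -(vq i) := by rw [hqfdef]; simp [hi]
      rw [this]
      ring
  set d : ℝ := ∑ i, qf i * (αs i : ℝ) with hddef2
  have hfe : ∀ α ∈ M, (∑ i, qf i * (α i : ℝ)) = d := by
    intro α hα
    rw [hqfS' α (hMS' hα), hddef2, hqfS' αs hαsS']
    have h1 := hvqM α hα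
    have h2 : (∑ i, vq i * ((α i:ℝ) - (αs i:ℝ))) =
        (∑ i, vq i * (α i:ℝ)) - (∑ i, vq i * (αs i:ℝ)) := by
      rw [← Finset.sum_sub_distrib]
      exact Finset.sum_congr rfl fun i _ => by ring
    rw [h2] at h1
    have h3 : (∑ i, vq i * (α i:ℝ)) = (∑ i, vq i * (αs i:ℝ)) := by linarith
    rw [h3]
  have hflt : ∀ α ∈ S', α ∉ M → d < ∑ i, qf i * (α i : ℝ) := by
    intro α hα hαM
    rw [hqfS' α hα, hddef2, hqfS' αs hαsS']
    have h1 := hvqlt α hα hαM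
    have h2 : (∑ i, vq i * ((αs i:ℝ) - (α i:ℝ))) =
        (∑ i, vq i * (αs i:ℝ)) - (∑ i, vq i * (α i:ℝ)) := by
      rw [← Finset.sum_sub_distrib]
      exact Finset.sum_congr rfl fun i _ => by ring
    rw [h2] at h1
    linarith
  have hdle : d ≤ C0 := by
    rw [hddef2, hqfS' αs hαsS']
    have := habs αs hαsS
    have := abs_nonneg (∑ i, vq i * (αs i : ℝ))
    have := neg_abs_le (∑ i, vq i * (αs i : ℝ))
    linarith [abs_le.1 (habs αs hαsS)]
  have hfZ : ∀ α ∈ f.support, α ∉ S' → d < ∑ i, qf i * (α i : ℝ) := by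
    intro α hα hαS'
    have hex : ∃ i ∈ Z, α i ≠ 0 := by
      by_contra h
      push_neg at h
      exact hαS' (Finset.mem_filter.2 ⟨hα, fun i hi => h i hi⟩)
    obtain ⟨i0, hi0Z, hi0⟩ := hex
    have hsplit : (∑ i, qf i * (α i : ℝ)) =
        (∑ i ∈ Finset.univ.filter (fun i => i ∈ Z), N * (α i : ℝ)) +
        (∑ i ∈ Finset.univ.filter (fun i => i ∉ Z), -(vq i) * (α i : ℝ)) := by
      rw [← Finset.sum_filter_add_sum_filter_not Finset.univ (fun i => i ∈ Z)]
      congr 1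
      · refine Finset.sum_congr rfl fun i hi => ?_
        rw [Finset.mem_filter] at hi
        rw [hqfdef]
        simp [hi.2]
      · refine Finset.sum_congr rfl fun i hi => ?_
        rw [Finset.mem_filter] at hi
        rw [hqfdef]
        simp [hi.2]
    rw [hsplit]
    have hb1 : N ≤ ∑ i ∈ Finset.univ.filter (fun i => i ∈ Z), N * (α i : ℝ) := by
      have h1 : N * 1 ≤ N * (α i0 : ℝ) := by
        refine mul_le_mul_of_nonneg_left ?_ (by rw [hNdef]; linarith)
        exact_mod_cast Nat.one_le_iff_ne_zero.2 hi0
      calc N = N * 1 := by ring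
        _ ≤ N * (α i0 : ℝ) := h1
        _ ≤ ∑ i ∈ Finset.univ.filter (fun i => i ∈ Z), N * (α i : ℝ) := by
            refine Finset.single_le_sum (f := fun i => N * (α i : ℝ))
              (fun i _ => mul_nonneg (by rw [hNdef]; linarith) (Nat.cast_nonneg _)) ?_
            exact Finset.mem_filter.2 ⟨Finset.mem_univ _, hi0Z⟩
    have hb2 : -C0 ≤ ∑ i ∈ Finset.univ.filter (fun i => i ∉ Z), -(vq i) * (α i : ℝ) := by
      have h1 : |∑ i ∈ Finset.univ.filter (fun i => i ∉ Z), vq i * (α i : ℝ)| ≤ C0 := by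
        calc |∑ i ∈ Finset.univ.filter (fun i => i ∉ Z), vq i * (α i : ℝ)|
            ≤ ∑ i ∈ Finset.univ.filter (fun i => i ∉ Z), |vq i * (α i : ℝ)| :=
              Finset.abs_sum_le_sum_abs _ _
          _ ≤ ∑ i, |vq i * (α i : ℝ)| :=
              Finset.sum_le_sum_of_subset_of_nonneg (Finset.filter_subset _ _)
                (fun i _ _ => abs_nonneg _)
          _ = ∑ i, |vq i| * (α i : ℝ) := by
              refine Finset.sum_congr rfl fun i _ => ?_
              rw [abs_mul, abs_of_nonneg (Nat.cast_nonneg _ : (0:ℝ) ≤ (α i : ℝ))]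
          _ ≤ C0 := hC0nn α hα
      have h2 : (∑ i ∈ Finset.univ.filter (fun i => i ∉ Z), -(vq i) * (α i : ℝ)) =
          -(∑ i ∈ Finset.univ.filter (fun i => i ∉ Z), vq i * (α i : ℝ)) := by
        rw [← Finset.sum_neg_distrib]
        exact Finset.sum_congr rfl fun i _ => by ring
      rw [h2]
      linarith [abs_le.1 h1]
    rw [hNdef] at hb1
    linarith
  have hge : ∀ α ∈ f.support, d ≤ ∑ i, qf i * (α i : ℝ) := by
    intro α hα
    by_cases h1 : α ∈ S'
    · by_cases h2 : α ∈ M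
      · exact (hfe α h2).ge
      · exact (hflt α h1 h2).le
    · exact (hfZ α hα h1).le
  -- dMin
  have hdMin : dMin qf f = d := by
    apply IsLeast.csInf_eq
    constructor
    · refine ⟨expR αs, aux_mem_newton hαsS, ?_⟩
      rw [hddef2]
      rfl
    · rintro r ⟨pt, hpt, rfl⟩
      have hlin : IsLinearMap ℝ (fun p : Fin n → ℝ => ∑ i, qf i * p i) := by
        constructor
        · intro p q
          rw [← Finset.sum_add_distrib]
          exact Finset.sum_congr rfl fun i _ => by
            show qf i * (p i + q i) = _
            ring
        · intro cc p
          rw [Finset.smul_sum]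
          refine Finset.sum_congr rfl fun i _ => ?_
          show qf i * (cc * p i) = cc • (qf i * p i)
          rw [smul_eq_mul]
          ring
      have hsub : Newton f ⊆ {p : Fin n → ℝ | d ≤ ∑ i, qf i * p i} := by
        apply convexHull_min ?_ (convex_halfSpace_ge hlin d)
        rintro _ ⟨α, hα, rfl⟩
        exact hge α hα
      exact hsub hpt
  -- the face is exactly M
  have hfaceiff : ∀ α ∈ f.support, (expR α ∈ face qf f ↔ α ∈ M) := by
    intro α hα
    constructor
    · intro hmem
      obtain ⟨-, hval⟩ := hmem
      rw [hdMin] at hval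
      by_contra h2
      by_cases h1 : α ∈ S'
      · exact absurd hval (ne_of_gt (hflt α h1 h2))
      · exact absurd hval (ne_of_gt (hfZ α hα h1))
    · intro hmem
      exact ⟨aux_mem_newton hα, by rw [hdMin]; exact hfe α hmem⟩
  have hqfistar : qf istar < 0 := by
    rw [hqfdef]
    simp only [if_neg histar]
    linarith
  have hNB : face qf f ∈ NewtonBoundary f := ⟨qf, ⟨istar, hqfistar⟩, rfl⟩
  have hfilter : f.support.filter (fun α => expR α ∈ face qf f) = M := by
    ext α
    rw [Finset.mem_filter]
    constructor
    · rintro ⟨h1, h2⟩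
      exact (hfaceiff α h1).1 h2
    · intro h1
      have h2 : α ∈ f.support := hS'S (hMS' h1)
      exact ⟨h2, (hfaceiff α h2).2 h1⟩
  -- construct the functional ψ and the vector vv
  have hcomp : ∀ c : {a // a ∈ M} → ℝ,
      (∑ j : {a // a ∈ M}, c j • dd j.1) = 0 →
      (∑ j : {a // a ∈ M}, c j * Real.log (T j.1)) = 0 := by
    intro c hc0
    have h1 : ∀ k, (∑ j : {a // a ∈ M}, c j * pr (dd j.1) k) = 0 := by
      intro k
      rw [← hprlin Finset.univ c (fun j => dd j.1) k]
      rw [hc0]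
      have hz : ∀ i, (0 : EuclideanSpace ℝ (Fin n)) i = 0 := fun i => rfl
      show (∑ i, (0 : EuclideanSpace ℝ (Fin n)) i * Real.log (x k i)) = 0
      simp [hz]
    have h2 : Tendsto (fun k => ∑ j : {a // a ∈ M}, c j * pr (dd j.1) k)
        (U : Filter ℕ) (nhds (∑ j : {a // a ∈ M}, c j * Real.log (T j.1))) :=
      tendsto_finset_sum Finset.univ fun j _ => (hprM j.1 j.2).const_mul _
    have h3 : Tendsto (fun k => ∑ j : {a // a ∈ M}, c j * pr (dd j.1) k)
        (U : Filter ℕ) (nhds 0) := by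
      refine Filter.Tendsto.congr (fun k => (h1 k).symm) tendsto_const_nhds
    exact (tendsto_nhds_unique h2 h3)
  obtain ⟨ψ, hψ⟩ := aux_ext (fun j : {a // a ∈ M} => dd j.1)
    (fun j => Real.log (T j.1)) hcomp
  set vv : Fin n → ℝ := fun i => ψ (toE (Pi.single i 1)) with hvvdef
  have hψsum : ∀ p : Fin n → ℝ, ψ (toE p) = ∑ i, p i * vv i := by
    intro p
    conv_lhs => rw [← Finset.univ_sum_single p]
    rw [map_sum, map_sum]
    refine Finset.sum_congr rfl fun i _ => ?_
    have h2 : Pi.single i (p i) = p i • (Pi.single i (1:ℝ) : Fin n → ℝ) := by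
      rw [← Pi.single_smul, smul_eq_mul, mul_one]
    rw [h2, map_smul, map_smul, smul_eq_mul, hvvdef, mul_comm]
  have hvv : ∀ α ∈ M, (∑ i, ((α i : ℝ) - (αs i : ℝ)) * vv i) = Real.log (T α) := by
    intro α hα
    have h1 := hψ ⟨α, hα⟩
    rw [hdddef] at h1
    rw [hψsum] at h1
    rw [← h1]
    rfl
  -- signs
  set ε : Fin n → ℝ := fun i => if {k | 0 < x k i} ∈ U then 1 else -1 with hεdef
  have hεpm : ∀ i, ε i = 1 ∨ ε i = -1 := by
    intro i
    rw [hεdef]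
    by_cases h : {k | 0 < x k i} ∈ U
    · exact Or.inl (by simp [h])
    · exact Or.inr (by simp [h])
  have hεev : ∀ i, ∀ᶠ k in (U : Filter ℕ), x k i = ε i * |x k i| := by
    intro i
    by_cases h : {k | 0 < x k i} ∈ U
    · have h1 : ∀ᶠ k in (U : Filter ℕ), 0 < x k i := h
      filter_upwards [h1] with k hk
      rw [hεdef]
      simp [h, abs_of_pos hk]
    · have h1 : {k | ¬ 0 < x k i} ∈ U := (Ultrafilter.compl_mem_iff_notMem).2 h
      have h2 : ∀ᶠ k in (U : Filter ℕ), ¬ 0 < x k i := h1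
      filter_upwards [h2] with k hk
      rw [hεdef]
      push_neg at hk
      simp only [if_neg h]
      rw [abs_of_nonpos hk]
      ring
  set sg : (Fin n →₀ ℕ) → ℝ := fun α => ∏ i, (ε i) ^ (α i) with hsgdef
  have hsgpm : ∀ α, sg α = 1 ∨ sg α = -1 := by
    intro α
    rw [hsgdef]
    refine Finset.prod_induction _ (fun r => r = 1 ∨ r = -1) ?_ (Or.inl rfl) ?_
    · rintro a b (ha | ha) (hb | hb) <;> rw [ha, hb] <;> norm_num
    · intro i _
      rcases hεpm i with h | h
      · rw [h]; simp
      · rw [h]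
        rcases Nat.even_or_odd (α i) with h2 | h2
        · exact Or.inl (Even.neg_one_pow h2)
        · exact Or.inr (Odd.neg_one_pow h2)
  have hsgsq : ∀ α, sg α * sg α = 1 := by
    intro α
    rcases hsgpm α with h | h <;> rw [h] <;> norm_num
  have hmps : ∀ α : Fin n →₀ ℕ, ∀ᶠ k in (U : Filter ℕ),
      mpow (x k) α = sg α * |mpow (x k) α| := by
    intro α
    have hall : ∀ᶠ k in (U : Filter ℕ), ∀ i, x k i = ε i * |x k i| :=
      Filter.eventually_all.2 hεev
    filter_upwards [hall] with k hk
    have h0 : mpow (x k) α = ∏ i, (ε i * |x k i|) ^ (α i) := by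
      rw [mpow]
      exact Finset.prod_congr rfl fun i _ => by rw [← hk i]
    have h1 : (∏ i, (ε i * |x k i|) ^ (α i)) = sg α * |mpow (x k) α| := by
      have h2 : ∀ i : Fin n, (ε i * |x k i|) ^ (α i) = (ε i) ^ (α i) * |x k i| ^ (α i) :=
        fun i => mul_pow _ _ _
      simp_rw [h2]
      rw [Finset.prod_mul_distrib]
      have h3 : (∏ i, |x k i| ^ (α i)) = |mpow (x k) α| := by
        rw [mpow, Finset.abs_prod]
        exact (Finset.prod_congr rfl fun i _ => (abs_pow _ _)).symm
      rw [h3]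
    exact h0.trans h1
  have hts : ∀ α ∈ M, T α = (sg α * sg αs) * |T α| := by
    intro α hα
    have hev : ∀ᶠ k in (U : Filter ℕ), t α k = (sg α * sg αs) * |t α k| := by
      filter_upwards [hmps α, hmps αs, hαsne] with k h1 h2 h3
      have h7 : |mpow (x k) αs| ≠ 0 := abs_ne_zero.2 h3
      have h8 : |t α k| = |mpow (x k) α| / |mpow (x k) αs| := by
        show |mpow (x k) α / mpow (x k) αs| = _
        rw [abs_div]
      show mpow (x k) α / mpow (x k) αs = _
      rw [h8]
      conv_lhs => rw [h1, h2]
      rcases hsgpm α with h5 | h5 <;> rcases hsgpm αs with h6 | h6 <;> rw [h5, h6] <;>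
        field_simp [h7] <;> try ring
    have h2 : Tendsto (t α) (U : Filter ℕ) (nhds ((sg α * sg αs) * |T α|)) := by
      have h3 : Tendsto (fun k => (sg α * sg αs) * |t α k|) (U : Filter ℕ)
          (nhds ((sg α * sg αs) * |T α|)) :=
        ((hTt α (hS'S (hMS' hα))).abs).const_mul _
      exact h3.congr' (hev.mono fun k hk => hk.symm)
    exact tendsto_nhds_unique (hTt α (hS'S (hMS' hα))) h2
  -- the witness point y
  set y : Fin n → ℝ := fun i => ε i * Real.exp (vv i) with hydef
  have hy : ∀ i, y i ≠ 0 := by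
    intro i
    rw [hydef]
    refine mul_ne_zero ?_ (Real.exp_ne_zero _)
    rcases hεpm i with h | h <;> rw [h] <;> norm_num
  have hmpy : ∀ α : Fin n →₀ ℕ, mpow y α = sg α * Real.exp (∑ i, (α i : ℝ) * vv i) := by
    intro α
    rw [mpow]
    have h1 : ∀ i : Fin n, y i ^ (α i) = (ε i) ^ (α i) * Real.exp ((α i : ℝ) * vv i) := by
      intro i
      rw [hydef]
      show (ε i * Real.exp (vv i)) ^ (α i) = _
      rw [mul_pow, ← Real.exp_nat_mul]
    simp_rw [h1]
    rw [Finset.prod_mul_distrib, ← Real.exp_sum]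
  have hyα : ∀ α ∈ M, mpow y α =
      (sg αs * T α) * Real.exp (∑ i, (αs i : ℝ) * vv i) := by
    intro α hα
    rw [hmpy α]
    have h1 : (∑ i, (α i : ℝ) * vv i) =
        (∑ i, ((α i : ℝ) - (αs i : ℝ)) * vv i) + (∑ i, (αs i : ℝ) * vv i) := by
      rw [← Finset.sum_add_distrib]
      exact Finset.sum_congr rfl fun i _ => by ring
    rw [h1, hvv α hα, Real.exp_add]
    have hTne : T α ≠ 0 := (Finset.mem_filter.1 hα).2
    have h2 : Real.exp (Real.log (T α)) = |T α| := by
      rw [← Real.log_abs, Real.exp_log (abs_pos.2 hTne)]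
    rw [h2]
    have h3 : sg α * |T α| = sg αs * T α := by
      have h4 := hts α hα
      rcases hsgpm α with h5 | h5 <;> rcases hsgpm αs with h6 | h6 <;>
        rw [h5, h6] at h4 ⊢ <;> linarith
    rw [← mul_assoc, h3]
  -- evaluation of the truncation at y
  set Lfin : ℝ := ∑ α ∈ M, f.coeff α * T α with hLdef
  have htr_eval : eval y (trunc f (face qf f)) =
      Real.exp (∑ i, (αs i : ℝ) * vv i) * (sg αs * Lfin) := by
    rw [trunc]
    rw [map_sum]
    have h1 : ∀ α ∈ f.support.filter (fun α => expR α ∈ face qf f),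
        eval y ((monomial α) (f.coeff α)) = f.coeff α * mpow y α := by
      intro α _
      rw [MvPolynomial.eval_monomial, Finsupp.prod_pow]
      rfl
    rw [Finset.sum_congr rfl h1]
    have h2 : f.support.filter (fun α => expR α ∈ face qf f) = M := by
      rw [← hfilter]
    rw [h2]
    rw [hLdef, Finset.mul_sum, Finset.mul_sum]
    refine Finset.sum_congr rfl fun α hα => ?_
    rw [hyα α hα]
    ring
  have hposL : 0 < sg αs * Lfin := by
    have h1 := hpos (face qf f) hNB y hy
    rw [htr_eval] at h1
    nlinarith [Real.exp_pos (∑ i, (αs i : ℝ) * vv i)]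
  -- the contradiction via the normalized values
  set u : ℕ → ℝ := fun k => eval (x k) f / |mpow (x k) αs| with hudef
  have hTsup : ∀ α ∈ f.support, α ∉ M → T α = 0 := by
    intro α hα hαM
    by_cases h1 : α ∈ S'
    · by_contra h2
      exact hαM (Finset.mem_filter.2 ⟨h1, h2⟩)
    · exact hTZ α hα h1
  have hLfin' : (∑ α ∈ f.support, f.coeff α * T α) = Lfin := by
    rw [hLdef]
    refine (Finset.sum_subset (fun α hα => hS'S (hMS' hα)) ?_).symm
    intro α hα hαM
    rw [hTsup α hα hαM, mul_zero]
  have hu_ev : ∀ᶠ k in (U : Filter ℕ),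
      u k = sg αs * ∑ α ∈ f.support, f.coeff α * t α k := by
    filter_upwards [hmps αs, hαsne] with k h1 h2
    have h7 : |mpow (x k) αs| ≠ 0 := abs_ne_zero.2 h2
    show eval (x k) f / |mpow (x k) αs| = _
    rw [MvPolynomial.eval_eq']
    rw [Finset.sum_div, Finset.mul_sum]
    refine Finset.sum_congr rfl fun α hα => ?_
    show (f.coeff α * mpow (x k) α) / |mpow (x k) αs| =
      sg αs * (f.coeff α * (mpow (x k) α / mpow (x k) αs))
    have h6 : |mpow (x k) αs| = sg αs * mpow (x k) αs := by
      rcases hsgpm αs with h5 | h5 <;> rw [h5] at h1 ⊢ <;> linarith [h1]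
    rw [h6]
    rcases hsgpm αs with h5 | h5 <;> rw [h5] <;> field_simp [h2] <;> try ring
  have hu_tend : Tendsto u (U : Filter ℕ) (nhds (sg αs * Lfin)) := by
    have h1 : Tendsto (fun k => sg αs * ∑ α ∈ f.support, f.coeff α * t α k)
        (U : Filter ℕ) (nhds (sg αs * ∑ α ∈ f.support, f.coeff α * T α)) := by
      refine Filter.Tendsto.const_mul _ ?_
      exact tendsto_finset_sum _ fun α hα => (hTt α hα).const_mul _
    rw [hLfin'] at h1
    exact (h1.congr' (hu_ev.mono fun k hk => hk.symm))
  have hu_le : ∀ δ : ℝ, 0 < δ → sg αs * Lfin ≤ δ := by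
    intro δ hδ
    refine le_of_tendsto hu_tend ?_
    have h1 : ∀ᶠ (k : ℕ) in atTop, (m : ℝ) / ((k:ℝ)+1) ≤ δ := by
      rw [Filter.eventually_atTop]
      refine ⟨⌈(m:ℝ)/δ⌉₊, fun k hk => ?_⟩
      have h2 : (m:ℝ)/δ ≤ (k:ℝ)+1 := by
        calc (m:ℝ)/δ ≤ (⌈(m:ℝ)/δ⌉₊ : ℝ) := Nat.le_ceil _
          _ ≤ (k:ℝ) := by exact_mod_cast hk
          _ ≤ (k:ℝ)+1 := by linarith
      rw [div_le_iff₀ (by positivity)]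
      rw [div_le_iff₀ hδ] at h2
      linarith
    filter_upwards [h1.filter_mono hU, hmaxeq] with k hk1 hk2
    have h3 : 0 < |mpow (x k) αs| := by
      rw [← hk2]; exact hmax k
    have h4 : eval (x k) f < ((m:ℝ) / ((k:ℝ)+1)) * |mpow (x k) αs| := by
      calc eval (x k) f < (1/((k:ℝ)+1)) * P f (x k) := hxf k
        _ ≤ (1/((k:ℝ)+1)) * ((m:ℝ) * maxS k) := by
            refine mul_le_mul_of_nonneg_left (hPle k) (by positivity)
        _ = ((m:ℝ) / ((k:ℝ)+1)) * |mpow (x k) αs| := by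
            rw [hk2]; ring
    have h5 : u k ≤ (m:ℝ) / ((k:ℝ)+1) := by
      rw [hudef]
      show eval (x k) f / |mpow (x k) αs| ≤ _
      rw [div_le_iff₀ h3]
      exact h4.le
    linarith
  have := hu_le ((sg αs * Lfin)/2) (by linarith)
  linarith

theorem stmt8 {n : ℕ} (hn : 2 ≤ n) (f : MvPolynomial (Fin n) ℝ) (hf : f.totalDegree ≠ 0)
    (hpos : ∀ Δ ∈ NewtonBoundary f, ∀ x : Fin n → ℝ, (∀ i, x i ≠ 0) →
      0 < eval x (trunc f Δ)) :
    ∃ c₁ > (0 : ℝ), ∃ c₂ > (0 : ℝ), ∃ R > (0 : ℝ), ∀ x : Fin n → ℝ, R < ‖x‖ →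
      c₁ * P f x ≤ eval x f ∧ eval x f ≤ c₂ * P f x := by
  obtain ⟨c₁, hc₁, R, hR, hlow⟩ := aux_lower hn f hf hpos
  obtain ⟨c₂, hc₂, hup⟩ := aux_upper f hf
  exact ⟨c₁, hc₁, c₂, hc₂, R, hR, fun x hx => ⟨hlow x hx, hup x⟩⟩
end

section
/- Let f : ℝⁿ → ℝ be a nonconstant polynomial. Suppose f is non-degenerate at infinity and there exists R > 0 with f(x) ≥ 0 for all ‖x‖ > R. Then for every face Δ ∈ Γ_∞(f), the face polynomial f_Δ is strictly positive on (ℝ\{0})ⁿ. -/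
open MvPolynomial Set Asymptotics Filter

open Topology
lemma trunc_nonneg {n : ℕ} (f : MvPolynomial (Fin n) ℝ) (hf0 : f ≠ 0) (R : ℝ)
    (hpos : ∀ x : Fin n → ℝ, R < ‖x‖ → 0 ≤ eval x f) (q : Fin n → ℝ) {j : Fin n}
    (hqj : q j < 0) (x : Fin n → ℝ) (hx : ∀ i, x i ≠ 0) :
    0 ≤ eval x (trunc f (face q f)) := by
  classical
  have hfne : f.support.Nonempty := support_nonempty.mpr hf0
  set ℓ : (Fin n → ℝ) → ℝ := fun y => ∑ i, q i * y i with hℓ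
  have hlin : IsLinearMap ℝ ℓ := by
    constructor
    · intro a b; simp [hℓ, mul_add, Finset.sum_add_distrib]
    · intro c a; simp [hℓ, Finset.mul_sum, smul_eq_mul]
      exact Finset.sum_congr rfl fun i _ => by ring
  have hmin := Finset.min'_mem (f.support.image fun α => ℓ (expR α)) (hfne.image _)
  rw [Finset.mem_image] at hmin
  obtain ⟨α₀, hα₀, hα₀m⟩ := hmin
  set m := (f.support.image fun α => ℓ (expR α)).min' (hfne.image _) with hm
  have hℓge : ∀ α ∈ f.support, m ≤ ℓ (expR α) := fun α hα =>
    Finset.min'_le _ _ (Finset.mem_image_of_mem _ hα)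
  have hNsub : Newton f ⊆ {y | m ≤ ℓ y} := by
    apply convexHull_min _ (convex_halfSpace_ge hlin m)
    rintro _ ⟨α, hα, rfl⟩
    exact hℓge α hα
  have hmemN : ∀ α ∈ f.support, expR α ∈ Newton f := fun α hα =>
    subset_convexHull _ _ ⟨α, hα, rfl⟩
  have hmem : m ∈ ℓ '' Newton f := ⟨expR α₀, hmemN _ hα₀, hα₀m⟩
  have hd : dMin q f = m := by
    apply le_antisymm
    · exact csInf_le ⟨m, by rintro _ ⟨y, hy, rfl⟩; exact hNsub hy⟩ hmem
    · exact le_csInf ⟨_, hmem⟩ (by rintro _ ⟨y, hy, rfl⟩; exact hNsub hy)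
  have hface : ∀ α ∈ f.support, (expR α ∈ face q f ↔ ℓ (expR α) = m) := by
    intro α hα
    constructor
    · intro h; rw [← hd]; exact h.2
    · intro h; exact ⟨hmemN _ hα, by rw [hd]; exact h⟩
  have heval_trunc : eval x (trunc f (face q f)) =
      ∑ α ∈ f.support, (if expR α ∈ face q f then f.coeff α * ∏ i, x i ^ α i else 0) := by
    rw [trunc, map_sum, ← Finset.sum_filter]
    apply Finset.sum_congr (by congr) fun α _ => ?_
    rw [eval_monomial]
    congr 1
    exact Finsupp.prod_pow α x
  set L := eval x (trunc f (face q f)) with hL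
  set G : ℝ → ℝ := fun s => ∑ α ∈ f.support,
    (f.coeff α * ∏ i, x i ^ α i) * s ^ (m - ℓ (expR α)) with hG
  have hGtend : Tendsto G atTop (𝓝 L) := by
    rw [heval_trunc]
    apply tendsto_finset_sum
    intro α hα
    by_cases hc : ℓ (expR α) = m
    · have hmem : (expR α ∈ face q f) := (hface α hα).2 hc
      simp only [hc, sub_self, Real.rpow_zero, mul_one, if_pos hmem]
      exact tendsto_const_nhds
    · have hlt : 0 < ℓ (expR α) - m := sub_pos.mpr ((hℓge α hα).lt_of_ne fun e => hc e.symm)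
      have h0 : Tendsto (fun s : ℝ => s ^ (m - ℓ (expR α))) atTop (𝓝 0) := by
        have := tendsto_rpow_neg_atTop hlt
        simpa [neg_sub] using this
      have hnc : (expR α ∈ face q f) → False := fun h => hc ((hface α hα).1 h)
      simp only [if_neg hnc]
      simpa using h0.const_mul (f.coeff α * ∏ i, x i ^ α i)
  have hev : ∀ s : ℝ, 0 < s →
      eval (fun i => x i * s ^ (-q i)) f = s ^ (-m) * G s := by
    intro s hs
    rw [eval_eq', hG, Finset.mul_sum]
    apply Finset.sum_congr rfl
    intro α hα
    have h1 : ∏ i, (x i * s ^ (-q i)) ^ α i =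
        (∏ i, x i ^ α i) * s ^ (-(ℓ (expR α))) := by
      simp only [mul_pow]
      rw [Finset.prod_mul_distrib]
      congr 1
      have h2 : ∀ i, (s ^ (-q i)) ^ (α i) = s ^ (-q i * (α i : ℝ)) := by
        intro i
        rw [Real.rpow_mul hs.le, Real.rpow_natCast]
      rw [Finset.prod_congr rfl (fun i _ => h2 i), ← Real.rpow_sum_of_pos hs]
      congr 1
      simp [hℓ, expR, neg_mul, Finset.sum_neg_distrib]
    rw [h1]
    have h3 : s ^ (-m) * s ^ (m - ℓ (expR α)) = s ^ (-(ℓ (expR α))) := by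
      rw [← Real.rpow_add hs]; congr 1; ring
    rw [← h3]; ring
  have hGnn : ∀ᶠ s : ℝ in atTop, 0 ≤ G s := by
    have h2 : Tendsto (fun s : ℝ => |x j| * s ^ (-q j)) atTop atTop :=
      (tendsto_rpow_atTop (neg_pos.2 hqj)).const_mul_atTop (abs_pos.2 (hx j))
    filter_upwards [eventually_gt_atTop (0 : ℝ), h2.eventually_gt_atTop R] with s hs hsR
    have hnorm : R < ‖(fun i => x i * s ^ (-q i))‖ := by
      calc R < |x j| * s ^ (-q j) := hsR
        _ = ‖x j * s ^ (-q j)‖ := by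
            rw [Real.norm_eq_abs, abs_mul, abs_of_pos (Real.rpow_pos_of_pos hs _)]
        _ ≤ _ := norm_le_pi_norm (fun i => x i * s ^ (-q i)) j
    have h0 : 0 ≤ s ^ (-m) * G s := (hev s hs) ▸ hpos _ hnorm
    nlinarith [Real.rpow_pos_of_pos hs (-m)]
  exact ge_of_tendsto hGtend hGnn

lemma hasDerivAt_eval_update {n : ℕ} (p : MvPolynomial (Fin n) ℝ) (i : Fin n)
    (x : Fin n → ℝ) (t : ℝ) :
    HasDerivAt (fun s => eval (Function.update x i s) p)
      (eval (Function.update x i t) (pderiv i p)) t := by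
  induction p using MvPolynomial.induction_on with
  | C a => simpa [pderiv_C] using hasDerivAt_const t a
  | add p q hp hq => simpa using hp.fun_add hq
  | mul_X p j hp =>
    rcases eq_or_ne j i with rfl | hne
    · have := hp.fun_mul (hasDerivAt_id' t)
      simpa [pderiv_mul, pderiv_X_self, Function.update_self, mul_comm, mul_add, add_comm]
        using this
    · have := hp.mul_const (x j)
      simp only [map_mul, eval_X, Function.update_apply, if_neg hne] at *
      simpa [pderiv_mul, pderiv_X_of_ne hne, Function.update_apply, if_neg hne, mul_comm]
        using this


theorem stmt10 {n : ℕ} (f : MvPolynomial (Fin n) ℝ) (hf : f.totalDegree ≠ 0)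
    (hnd : Nondeg f) (R : ℝ) (hR : 0 < R)
    (hpos : ∀ x : Fin n → ℝ, R < ‖x‖ → 0 ≤ eval x f) :
    ∀ Δ ∈ NewtonBoundary f, ∀ x : Fin n → ℝ, (∀ i, x i ≠ 0) → 0 < eval x (trunc f Δ) := by
  classical
  rintro Δ ⟨q, ⟨j, hqj⟩, rfl⟩ x hx
  have hf0 : f ≠ 0 := fun h => hf (by simp [h])
  have hnn : ∀ y : Fin n → ℝ, (∀ i, y i ≠ 0) → 0 ≤ eval y (trunc f (face q f)) :=
    fun y hy => trunc_nonneg f hf0 R hpos q hqj y hy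
  rcases (hnn x hx).lt_or_eq with h | h
  · exact h
  exfalso
  apply hnd (face q f) ⟨q, ⟨j, hqj⟩, rfl⟩
  refine ⟨x, hx, h.symm, fun i => ?_⟩
  have hc : Continuous (fun t : ℝ => Function.update x i t) :=
    continuous_const.update i continuous_id
  have hopen : IsOpen {y : Fin n → ℝ | ∀ i, y i ≠ 0} := by
    have he : {y : Fin n → ℝ | ∀ i, y i ≠ 0} = ⋂ i, (fun y : Fin n → ℝ => y i) ⁻¹' {0}ᶜ := by
      ext y; simp [Set.mem_iInter]
    rw [he]
    exact isOpen_iInter_of_finite fun i => isOpen_compl_singleton.preimage (continuous_apply i)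
  have hx' : Function.update x i (x i) = x := Function.update_eq_self i x
  have hmin : IsLocalMin (fun t => eval (Function.update x i t) (trunc f (face q f))) (x i) := by
    have hev : ∀ᶠ t in 𝓝 (x i),
        Function.update x i t ∈ {y : Fin n → ℝ | ∀ i, y i ≠ 0} := by
      have hp := (hopen.preimage hc).mem_nhds (by
        rw [Set.mem_preimage, hx']; exact hx)
      filter_upwards [hp] with t ht using ht
    filter_upwards [hev] with t ht
    rw [hx', ← h]
    exact hnn _ ht
  have hD := hasDerivAt_eval_update (trunc f (face q f)) i x (x i)
  rw [hx'] at hD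
  exact hmin.hasDerivAt_eq_zero hD
end

section
/- Let f : ℝⁿ → ℝ be a nonconstant polynomial with n ≥ 2 and 𝒫(x) = Σ_{α ∈ Γ(f) ∩ ℤ₊ⁿ}|x^α|. Suppose f|_{ℝ^J} ≢ 0 for all J ⊆ {1,…,n} and there exist σ ∈ {−1,1} and constants c₁, c₂, R > 0 with c₁𝒫(x) ≤ σf(x) ≤ c₂𝒫(x) for all ‖x‖ > R. Then Z(f) is stably compact: there is ε > 0 such that Z(f+g) is compact whenever Γ(g) ⊆ Γ(f) and ‖g‖ < ε. -/
open MvPolynomial Set Asymptotics Filter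

/-- The set of lattice points in the Newton polyhedron is finite. -/
lemma newton_lattice_finite {n : ℕ} (f : MvPolynomial (Fin n) ℝ) :
    ({α : Fin n →₀ ℕ | expR α ∈ Newton f}).Finite := by
  have hcoord : ∀ α ∈ {α : Fin n →₀ ℕ | expR α ∈ Newton f}, ∀ i, α i ≤ f.totalDegree := by
    intro α hα i
    have hsub : Newton f ⊆ {y : Fin n → ℝ | y i ≤ (f.totalDegree : ℝ)} := by
      apply convexHull_min
      · rintro y ⟨β, hβ, rfl⟩
        have h1 : β i ≤ β.sum fun _ e => e := by
          by_cases h : β i = 0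
          · simp [h]
          · exact Finset.single_le_sum (fun j _ => Nat.zero_le _) (Finsupp.mem_support_iff.2 h)
        have h2 := MvPolynomial.le_totalDegree hβ
        simp only [Set.mem_setOf_eq, expR]
        exact_mod_cast h1.trans h2
      · exact convex_halfSpace_le (LinearMap.isLinear (LinearMap.proj i)) _
    have h3 := hsub hα
    simp only [Set.mem_setOf_eq, expR] at h3
    exact_mod_cast h3
  have hsub2 : {α : Fin n →₀ ℕ | expR α ∈ Newton f} ⊆
      Set.Iic (Finsupp.equivFunOnFinite.symm fun _ => f.totalDegree) := by
    intro α hα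
    rw [Set.mem_Iic, Finsupp.le_def]
    intro i
    simpa using hcoord α hα i
  exact (Set.finite_Iic _).subset hsub2

/-- Every coefficient of `g` is bounded by `polyNorm g`. -/
lemma coeff_le_polyNorm {n : ℕ} (g : MvPolynomial (Fin n) ℝ) {α : Fin n →₀ ℕ}
    (hα : α ∈ g.support) : |g.coeff α| ≤ polyNorm g := by
  have hbdd : BddAbove (Set.range fun β => ⨆ _ : β ∈ g.support, |g.coeff β|) := by
    refine ⟨∑ β ∈ g.support, |g.coeff β|, ?_⟩
    rintro y ⟨β, rfl⟩
    by_cases h : β ∈ g.support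
    · simp only
      rw [ciSup_pos h]
      exact Finset.single_le_sum (f := fun β => |g.coeff β|) (fun _ _ => abs_nonneg _) h
    · show (⨆ _ : β ∈ g.support, |g.coeff β|) ≤ _
      haveI : IsEmpty (β ∈ g.support) := ⟨h⟩
      rw [Real.iSup_of_isEmpty]
      exact Finset.sum_nonneg fun _ _ => abs_nonneg _
  have := le_ciSup hbdd α
  rwa [ciSup_pos hα] at this

theorem stmt13 {n : ℕ} (hn : 2 ≤ n) (f : MvPolynomial (Fin n) ℝ) (hf : f.totalDegree ≠ 0)
    (hJ : ∀ J : Set (Fin n), ∃ x : Fin n → ℝ, (∀ j ∉ J, x j = 0) ∧ eval x f ≠ 0)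
    (σ : ℝ) (hσ : σ = 1 ∨ σ = -1) (c₁ c₂ R : ℝ) (hc₁ : 0 < c₁) (hc₂ : 0 < c₂) (hR : 0 < R)
    (hbound : ∀ x : Fin n → ℝ, R < ‖x‖ →
      c₁ * P f x ≤ σ * eval x f ∧ σ * eval x f ≤ c₂ * P f x) :
    StablyCompact f := by
  classical
  -- The constant coefficient of `f` is nonzero (take `J = ∅`).
  obtain ⟨x0, hx0, hfx0⟩ := hJ ∅
  have hx0' : x0 = 0 := funext fun j => hx0 j (Set.notMem_empty j)
  rw [hx0'] at hfx0
  have h0supp : (0 : Fin n →₀ ℕ) ∈ f.support := by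
    rw [MvPolynomial.mem_support_iff]
    intro h
    apply hfx0
    have : eval (0 : Fin n → ℝ) f = constantCoeff f :=
      congrFun (congrArg _ MvPolynomial.eval_zero) f
    rw [this, MvPolynomial.constantCoeff_eq]
    exact h
  haveI hfin : Fintype {α : Fin n →₀ ℕ // expR α ∈ Newton f} :=
    (newton_lattice_finite f).fintype
  have hPsum : ∀ x : Fin n → ℝ, P f x =
      ∑ α : {α : Fin n →₀ ℕ // expR α ∈ Newton f}, |∏ i, x i ^ ((α : Fin n →₀ ℕ) i)| :=
    fun x => tsum_fintype _
  have hexp0 : expR (0 : Fin n →₀ ℕ) ∈ Newton f :=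
    subset_convexHull ℝ _ ⟨0, h0supp, rfl⟩
  have hP1 : ∀ x : Fin n → ℝ, (1 : ℝ) ≤ P f x := by
    intro x
    rw [hPsum x]
    calc (1:ℝ) = |∏ i, x i ^ (((⟨0, hexp0⟩ : {α : Fin n →₀ ℕ // expR α ∈ Newton f}) :
          Fin n →₀ ℕ) i)| := by simp
      _ ≤ _ := Finset.single_le_sum
          (f := fun α : {α : Fin n →₀ ℕ // expR α ∈ Newton f} =>
            |∏ i, x i ^ ((α : Fin n →₀ ℕ) i)|)
          (fun a _ => abs_nonneg _) (Finset.mem_univ _)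
  refine ⟨c₁ / 2, by positivity, fun g hNg hgnorm => ?_⟩
  -- the sum of monomials of g is bounded by P f x
  have hgsum : ∀ x : Fin n → ℝ, ∑ α ∈ g.support, |∏ i, x i ^ α i| ≤ P f x := by
    intro x
    rw [hPsum x]
    have hmem : ∀ α ∈ g.support, expR α ∈ Newton f := fun α hα =>
      hNg (subset_convexHull ℝ _ ⟨α, hα, rfl⟩)
    rw [← Finset.sum_attach g.support (fun α => |∏ i, x i ^ α i|)]
    have hinj : ∀ a ∈ g.support.attach, ∀ b ∈ g.support.attach,
        (⟨a.1, hmem a.1 a.2⟩ : {α : Fin n →₀ ℕ // expR α ∈ Newton f}) = ⟨b.1, hmem b.1 b.2⟩ →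
        a = b := fun a _ b _ h => Subtype.ext (Subtype.mk_eq_mk.mp h)
    calc ∑ a ∈ g.support.attach, |∏ i, x i ^ ((a : Fin n →₀ ℕ) i)|
        = ∑ b ∈ g.support.attach.image
            (fun a => (⟨a.1, hmem a.1 a.2⟩ : {α : Fin n →₀ ℕ // expR α ∈ Newton f})),
            |∏ i, x i ^ ((b : Fin n →₀ ℕ) i)| :=
          (Finset.sum_image (f := fun b : {α : Fin n →₀ ℕ // expR α ∈ Newton f} =>
            |∏ i, x i ^ ((b : Fin n →₀ ℕ) i)|) hinj).symm
      _ ≤ ∑ b : {α : Fin n →₀ ℕ // expR α ∈ Newton f}, |∏ i, x i ^ ((b : Fin n →₀ ℕ) i)| :=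
          Finset.sum_le_sum_of_subset_of_nonneg (Finset.subset_univ _)
            (fun _ _ _ => abs_nonneg _)
  -- the perturbation is small
  have hgle : ∀ x : Fin n → ℝ, |eval x g| ≤ (c₁ / 2) * P f x := by
    intro x
    have h1 : |eval x g| ≤ ∑ α ∈ g.support, |g.coeff α| * |∏ i, x i ^ α i| := by
      rw [MvPolynomial.eval_eq']
      refine (Finset.abs_sum_le_sum_abs _ _).trans ?_
      refine Finset.sum_le_sum fun α hα => ?_
      rw [abs_mul]
    have h2 : ∑ α ∈ g.support, |g.coeff α| * |∏ i, x i ^ α i| ≤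
        (c₁ / 2) * ∑ α ∈ g.support, |∏ i, x i ^ α i| := by
      rw [Finset.mul_sum]
      refine Finset.sum_le_sum fun α hα => ?_
      exact mul_le_mul_of_nonneg_right ((coeff_le_polyNorm g hα).trans hgnorm.le)
        (abs_nonneg _)
    have h3 : (c₁ / 2) * ∑ α ∈ g.support, |∏ i, x i ^ α i| ≤ (c₁ / 2) * P f x :=
      mul_le_mul_of_nonneg_left (hgsum x) (by positivity)
    linarith
  -- the zero set is closed and bounded, hence compact
  have hclosed : IsClosed {x : Fin n → ℝ | eval x (f + g) = 0} :=
    isClosed_eq (MvPolynomial.continuous_eval _) continuous_const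
  have hss : {x : Fin n → ℝ | eval x (f + g) = 0} ⊆ Metric.closedBall 0 R := by
    intro x hx
    simp only [Set.mem_setOf_eq] at hx
    rw [Metric.mem_closedBall, dist_zero_right]
    by_contra hcon
    push_neg at hcon
    have h1 := (hbound x hcon).1
    have h2 := hgle x
    have habs : |σ * eval x g| = |eval x g| := by
      rcases hσ with h | h <;> rw [h] <;> simp [abs_mul]
    have hσg : -((c₁ / 2) * P f x) ≤ σ * eval x g := by
      have hna := neg_abs_le (σ * eval x g)
      rw [habs] at hna
      linarith
    have hev : σ * eval x (f + g) = σ * eval x f + σ * eval x g := by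
      rw [map_add]; ring
    have hpos : 0 < σ * eval x (f + g) := by
      rw [hev]
      nlinarith [hP1 x]
    rw [hx, mul_zero] at hpos
    exact lt_irrefl 0 hpos
  exact Metric.isCompact_of_isClosed_isBounded hclosed (Metric.isBounded_closedBall.subset hss)
end

section
/- Let g₁,…,g_l, h₁,…,h_m : ℝⁿ → ℝ be polynomials and let X = {x ∈ ℝⁿ | g₁(x) = ⋯ = g_l(x) = 0, h₁(x) ≥ 0, …, h_m(x) ≥ 0}. Then X is compact if and only if the zero set in ℝⁿ × ℝᵐ of the polynomial F(x,y) = Σᵢ gᵢ(x)² + Σⱼ (hⱼ(x) − yⱼ²)² is compact. -/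
open MvPolynomial Set Asymptotics Filter

theorem stmt15 {n l m : ℕ} (g : Fin l → MvPolynomial (Fin n) ℝ)
    (h : Fin m → MvPolynomial (Fin n) ℝ) :
    IsCompact {x : Fin n → ℝ | (∀ i, eval x (g i) = 0) ∧ ∀ j, 0 ≤ eval x (h j)} ↔
    IsCompact {p : (Fin n → ℝ) × (Fin m → ℝ) |
      ∑ i, (eval p.1 (g i)) ^ 2 + ∑ j, (eval p.1 (h j) - p.2 j ^ 2) ^ 2 = 0} := by
  set X := {x : Fin n → ℝ | (∀ i, eval x (g i) = 0) ∧ ∀ j, 0 ≤ eval x (h j)} with hXdef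
  set Y := {p : (Fin n → ℝ) × (Fin m → ℝ) |
      ∑ i, (eval p.1 (g i)) ^ 2 + ∑ j, (eval p.1 (h j) - p.2 j ^ 2) ^ 2 = 0} with hYdef
  have hmem : ∀ p : (Fin n → ℝ) × (Fin m → ℝ), p ∈ Y ↔
      (∀ i, eval p.1 (g i) = 0) ∧ ∀ j, eval p.1 (h j) = p.2 j ^ 2 := by
    intro p
    constructor
    · intro hp
      have hg0 : (0:ℝ) ≤ ∑ i, (eval p.1 (g i)) ^ 2 :=
        Finset.sum_nonneg fun i _ => sq_nonneg _
      have hh0 : (0:ℝ) ≤ ∑ j, (eval p.1 (h j) - p.2 j ^ 2) ^ 2 :=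
        Finset.sum_nonneg fun j _ => sq_nonneg _
      have hp' : ∑ i, (eval p.1 (g i)) ^ 2 + ∑ j, (eval p.1 (h j) - p.2 j ^ 2) ^ 2 = 0 := hp
      have h1 : ∑ i, (eval p.1 (g i)) ^ 2 = 0 := by linarith
      have h2 : ∑ j, (eval p.1 (h j) - p.2 j ^ 2) ^ 2 = 0 := by linarith
      constructor
      · intro i
        have := (Finset.sum_eq_zero_iff_of_nonneg (fun i _ => sq_nonneg _)).mp h1 i
          (Finset.mem_univ i)
        exact pow_eq_zero_iff (n := 2) (by norm_num) |>.mp this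
      · intro j
        have := (Finset.sum_eq_zero_iff_of_nonneg (fun j _ => sq_nonneg _)).mp h2 j
          (Finset.mem_univ j)
        have := pow_eq_zero_iff (n := 2) (by norm_num) |>.mp this
        linarith
    · rintro ⟨h1, h2⟩
      show ∑ i, (eval p.1 (g i)) ^ 2 + ∑ j, (eval p.1 (h j) - p.2 j ^ 2) ^ 2 = 0
      rw [Finset.sum_eq_zero (fun i _ => by rw [h1 i]; ring),
        Finset.sum_eq_zero (fun j _ => by rw [h2 j]; ring)]
      ring
  have hproj : X = Prod.fst '' Y := by
    ext x
    constructor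
    · rintro ⟨h1, h2⟩
      exact ⟨(x, fun j => Real.sqrt (eval x (h j))), (hmem _).mpr
        ⟨h1, fun j => (Real.sq_sqrt (h2 j)).symm⟩, rfl⟩
    · rintro ⟨p, hp, rfl⟩
      obtain ⟨h1, h2⟩ := (hmem p).mp hp
      exact ⟨h1, fun j => (h2 j) ▸ sq_nonneg _⟩
  have hYclosed : IsClosed Y := by
    have : Continuous fun p : (Fin n → ℝ) × (Fin m → ℝ) =>
        ∑ i, (eval p.1 (g i)) ^ 2 + ∑ j, (eval p.1 (h j) - p.2 j ^ 2) ^ 2 := by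
      apply Continuous.add
      · exact continuous_finset_sum _ fun i _ =>
          ((MvPolynomial.continuous_eval (g i)).comp continuous_fst).pow 2
      · exact continuous_finset_sum _ fun j _ =>
          (((MvPolynomial.continuous_eval (h j)).comp continuous_fst).sub
            (((continuous_apply j).comp continuous_snd).pow 2)).pow 2
    exact isClosed_eq this continuous_const
  constructor
  · intro hX
    rcases eq_empty_or_nonempty X with hXe | hXne
    · have : Y = ∅ := by
        rw [eq_empty_iff_forall_notMem]
        intro p hp
        obtain ⟨h1, h2⟩ := (hmem p).mp hp
        have : p.1 ∈ X := ⟨h1, fun j => (h2 j) ▸ sq_nonneg _⟩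
        rw [hXe] at this
        exact this
      rw [this]; exact isCompact_empty
    · have hC : ∀ j : Fin m, ∃ C : ℝ, ∀ x ∈ X, eval x (h j) ≤ C := by
        intro j
        obtain ⟨x₀, _, hx₀⟩ := hX.exists_isMaxOn hXne
          (MvPolynomial.continuous_eval (h j)).continuousOn
        exact ⟨eval x₀ (h j), hx₀⟩
      choose C hCle using hC
      apply IsCompact.of_isClosed_subset
        (hX.prod (isCompact_univ_pi fun j => isCompact_Icc
          (a := -Real.sqrt (C j)) (b := Real.sqrt (C j)))) hYclosed
      intro p hp
      obtain ⟨h1, h2⟩ := (hmem p).mp hp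
      have hp1 : p.1 ∈ X := ⟨h1, fun j => (h2 j) ▸ sq_nonneg _⟩
      refine ⟨hp1, fun j _ => ?_⟩
      have hsq : p.2 j ^ 2 ≤ C j := (h2 j) ▸ hCle j p.1 hp1
      have habs : |p.2 j| ≤ Real.sqrt (C j) := by
        rw [← Real.sqrt_sq_eq_abs]
        exact Real.sqrt_le_sqrt hsq
      exact abs_le.mp habs
  · intro hY
    rw [hproj]
    exact hY.image continuous_fst
end
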